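/- Suppose 𝒥 is a T₀-system. Let t ↦ μ^t (t ≥ 0) be a solution of the recombination equation such that μ^t is a probability mass function on X for every t. Then μ^t converges pointwise as t → ∞ to the product measure ν(x) = Π_{i∈Λ} μ_i^0(x_i), where μ_i^0 is the one-dimensional marginal of the initial condition μ^0 at coordinate i. -/

import Mathlib

open Finset

/-- Restriction of a word to a set of coordinates `M`. -/
def restrictW {Λ : Type*} (K : Λ → Type*) (M : Finset Λ) (x : ∀ i, K i) :
    ∀ i : M, K i := fun i => x i

/-- Marginal of `μ` on the set of coordinates `M`. -/
def marginal {Λ : Type*} [Fintype Λ] [DecidableEq Λ] (K : Λ → Type*)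
    [∀ i, Fintype (K i)] [∀ i, DecidableEq (K i)]
    (μ : (∀ i, K i) → ℝ) (M : Finset Λ) (a : ∀ i : M, K i) : ℝ :=
  ∑ x : ∀ i, K i, if restrictW K M x = a then μ x else 0

/-- One-dimensional marginal of `μ` at coordinate `i`. -/
def marg1 {Λ : Type*} [Fintype Λ] [DecidableEq Λ] (K : Λ → Type*)
    [∀ i, Fintype (K i)] [∀ i, DecidableEq (K i)]
    (μ : (∀ i, K i) → ℝ) (i : Λ) (a : K i) : ℝ :=
  ∑ x : ∀ i, K i, if x i = a then μ x else 0

/-- `I`-recombination: the word equal to `a` on `I` and to `x` off `I`. -/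
def recombW {Λ : Type*} [DecidableEq Λ] (K : Λ → Type*) (I : Finset Λ)
    (x : ∀ i, K i) (a : ∀ i : I, K i) : ∀ i, K i :=
  fun i => if h : i ∈ I then a ⟨i, h⟩ else x i

/-- Right hand side of the recombination equation. -/
def recombRHS {Λ : Type*} [Fintype Λ] [DecidableEq Λ] (K : Λ → Type*)
    [∀ i, Fintype (K i)] [∀ i, DecidableEq (K i)]
    (𝒥 : Finset (Finset Λ))
    (φ : ∀ I : Finset Λ, (∀ i : I, K i) → (∀ i : I, K i) → ℝ)
    (μ : (∀ i, K i) → ℝ) (x : ∀ i, K i) : ℝ :=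
  ∑ I ∈ 𝒥, ∑ y : ∀ i : I, K i,
    (φ I y (restrictW K I x) * marginal K μ I (restrictW K I x) * μ (recombW K I x y)
      - φ I (restrictW K I x) y * marginal K μ I y * μ x)

/-- A probability mass function on `∀ i, K i`. -/
def IsPMF {Λ : Type*} [Fintype Λ] [DecidableEq Λ] (K : Λ → Type*) [∀ i, Fintype (K i)]
    (μ : (∀ i, K i) → ℝ) : Prop :=
  (∀ x, 0 ≤ μ x) ∧ ∑ x : ∀ i, K i, μ x = 1

/-- `𝒥`-separated measure. -/
def IsSeparated {Λ : Type*} [Fintype Λ] [DecidableEq Λ] (K : Λ → Type*)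
    [∀ i, Fintype (K i)] [∀ i, DecidableEq (K i)]
    (𝒥 : Finset (Finset Λ)) (μ : (∀ i, K i) → ℝ) : Prop :=
  ∀ I ∈ 𝒥, ∀ x, μ x = marginal K μ I (restrictW K I x) * marginal K μ Iᶜ (restrictW K Iᶜ x)

/-- A `T₀`-system of frames. -/
def IsT0 {Λ : Type*} (𝒥 : Finset (Finset Λ)) : Prop :=
  ∀ i j : Λ, i ≠ j → ∃ I ∈ 𝒥, (i ∈ I ∧ j ∉ I) ∨ (j ∈ I ∧ i ∉ I)

open scoped Topology

set_option linter.unusedSectionVars false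
set_option maxHeartbeats 1000000

section Glue
variable {Λ : Type*} [Fintype Λ] [DecidableEq Λ] (K : Λ → Type*)
    [∀ i, Fintype (K i)] [∀ i, DecidableEq (K i)]

/-- glue a word on `Iᶜ` and a word on `I` into a full word. -/
def glue (I : Finset Λ) (u : ∀ i : (Iᶜ : Finset Λ), K i) (a : ∀ i : I, K i) : ∀ i, K i :=
  fun i => if h : i ∈ I then a ⟨i, h⟩ else u ⟨i, by simpa using h⟩

variable {K}

lemma glue_mem {I : Finset Λ} {u : ∀ i : (Iᶜ : Finset Λ), K i} {a : ∀ i : I, K i}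
    {i : Λ} (h : i ∈ I) : glue K I u a i = a ⟨i, h⟩ := dif_pos h

lemma glue_not_mem {I : Finset Λ} {u : ∀ i : (Iᶜ : Finset Λ), K i} {a : ∀ i : I, K i}
    {i : Λ} (h : i ∉ I) : glue K I u a i = u ⟨i, by simpa using h⟩ := dif_neg h

@[simp] lemma restrictW_glue (I : Finset Λ) (u : ∀ i : (Iᶜ : Finset Λ), K i) (a : ∀ i : I, K i) :
    restrictW K I (glue K I u a) = a := by
  funext i
  exact dif_pos i.2

@[simp] lemma restrictW_compl_glue (I : Finset Λ) (u : ∀ i : (Iᶜ : Finset Λ), K i)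
    (a : ∀ i : I, K i) : restrictW K Iᶜ (glue K I u a) = u := by
  funext i
  have hi : (i : Λ) ∉ I := Finset.mem_compl.mp i.2
  simp only [restrictW, glue, dif_neg hi]

@[simp] lemma glue_restrict (I : Finset Λ) (x : ∀ i, K i) :
    glue K I (restrictW K Iᶜ x) (restrictW K I x) = x := by
  funext i
  by_cases h : i ∈ I
  · exact dif_pos h
  · exact dif_neg h

@[simp] lemma recombW_glue (I : Finset Λ) (u : ∀ i : (Iᶜ : Finset Λ), K i)
    (a b : ∀ i : I, K i) : recombW K I (glue K I u a) b = glue K I u b := by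
  funext i
  by_cases h : i ∈ I
  · simp [recombW, glue, h]
  · simp [recombW, glue, h]

lemma recombW_eq_glue (I : Finset Λ) (x : ∀ i, K i) (b : ∀ i : I, K i) :
    recombW K I x b = glue K I (restrictW K Iᶜ x) b := by
  conv_lhs => rw [← glue_restrict I x]
  rw [recombW_glue]

variable (K)

/-- splitting of a product along `I`. -/
def splitEquiv (I : Finset Λ) :
    (∀ i, K i) ≃ (∀ i : (Iᶜ : Finset Λ), K i) × (∀ i : I, K i) where
  toFun x := (restrictW K Iᶜ x, restrictW K I x)
  invFun p := glue K I p.1 p.2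
  left_inv x := glue_restrict I x
  right_inv p := by simp

variable {K}

/-- fundamental sum splitting. -/
lemma sum_glue (I : Finset Λ) (f : (∀ i, K i) → ℝ) :
    ∑ x : ∀ i, K i, f x
      = ∑ u : ∀ i : (Iᶜ : Finset Λ), K i, ∑ a : ∀ i : I, K i, f (glue K I u a) := by
  have := Fintype.sum_equiv (splitEquiv K I) f
      (fun p => f (glue K I p.1 p.2)) (fun x => by simp [splitEquiv])
  rw [this, Fintype.sum_prod_type]

lemma marginal_eq_sum_glue (μ : (∀ i, K i) → ℝ) (I : Finset Λ) (a : ∀ i : I, K i) :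
    marginal K μ I a = ∑ u : ∀ i : (Iᶜ : Finset Λ), K i, μ (glue K I u a) := by
  rw [marginal, sum_glue I]
  refine Finset.sum_congr rfl fun u _ => ?_
  rw [Finset.sum_congr rfl (fun a' _ => by rw [restrictW_glue]),
    Finset.sum_ite_eq' Finset.univ a (fun a' => μ (glue K I u a'))]
  simp

lemma marginal_compl_eq_sum_glue (μ : (∀ i, K i) → ℝ) (I : Finset Λ)
    (u : ∀ i : (Iᶜ : Finset Λ), K i) :
    marginal K μ Iᶜ u = ∑ a : ∀ i : I, K i, μ (glue K I u a) := by
  rw [marginal, sum_glue I, Finset.sum_comm]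
  congr 1
  funext a
  rw [Finset.sum_congr rfl (fun u' _ => by rw [restrictW_compl_glue]),
    Finset.sum_ite_eq' Finset.univ u (fun u' => μ (glue K I u' a))]
  simp



/-- marginal of μ on A, evaluated at the A-restriction of x, as function of the full x -/
noncomputable def margOn (μ : (∀ i, K i) → ℝ) (A : Finset Λ) (x : ∀ i, K i) : ℝ :=
  ∑ y : ∀ i, K i, if ∀ i ∈ A, y i = x i then μ y else 0

lemma margOn_eq_marginal (μ : (∀ i, K i) → ℝ) (A : Finset Λ) (x : ∀ i, K i) :
    margOn μ A x = marginal K μ A (restrictW K A x) := by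
  rw [marginal, margOn]
  refine Finset.sum_congr rfl fun y _ => ?_
  refine if_congr ?_ rfl rfl
  constructor
  · intro h; funext i; exact h i i.2
  · intro h i hi; exact congrFun h ⟨i, hi⟩

lemma margOn_univ {μ : (∀ i, K i) → ℝ} (x : ∀ i, K i) : margOn μ Finset.univ x = μ x := by
  rw [margOn]
  rw [Finset.sum_congr rfl (fun y _ => by
    have : (∀ i ∈ Finset.univ, y i = x i) ↔ y = x := by
      constructor
      · intro h; funext i; exact h i (Finset.mem_univ i)
      · rintro rfl i _; rfl
    rw [if_congr this rfl rfl])]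
  simp

lemma margOn_empty {μ : (∀ i, K i) → ℝ} (hμ : ∑ y : ∀ i, K i, μ y = 1) (x : ∀ i, K i) :
    margOn μ (∅ : Finset Λ) x = 1 := by
  rw [margOn]; simpa using hμ

lemma margOn_singleton (μ : (∀ i, K i) → ℝ) (i : Λ) (x : ∀ i, K i) :
    margOn μ {i} x = marg1 K μ i (x i) := by
  rw [margOn, marg1]
  refine Finset.sum_congr rfl fun y _ => ?_
  refine if_congr ?_ rfl rfl
  constructor
  · intro h; exact h i (Finset.mem_singleton_self i)
  · intro h j hj; rwa [Finset.mem_singleton.mp hj]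

private lemma ite_and_mul (p q : Prop) [Decidable p] [Decidable q] (f g : ℝ) :
    (if p ∧ q then f * g else 0) = (if p then f else 0) * (if q then g else 0) := by
  by_cases hp : p <;> by_cases hq : q <;> simp [hp, hq]

/-- Key splitting lemma: if μ separates along I, each margOn factorizes across I. -/
lemma margOn_split {μ : (∀ i, K i) → ℝ} {I : Finset Λ}
    (hsep : ∀ z, μ z = margOn μ I z * margOn μ Iᶜ z)
    (A : Finset Λ) (x : ∀ i, K i) :
    margOn μ A x = margOn μ (A ∩ I) x * margOn μ (A \ I) x := by
  classical
  set F : (∀ i : I, K i) → ℝ :=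
    fun a => if (∀ i : I, (i : Λ) ∈ A → a i = x i) then marginal K μ I a else 0 with hF
  set G : (∀ i : (Iᶜ : Finset Λ), K i) → ℝ :=
    fun u => if (∀ i : (Iᶜ : Finset Λ), (i : Λ) ∈ A → u i = x i) then marginal K μ Iᶜ u else 0
    with hG
  have sub1 : margOn μ (A ∩ I) x = ∑ a, F a := by
    rw [margOn, sum_glue I, Finset.sum_comm]
    refine Finset.sum_congr rfl fun a _ => ?_
    have hcond : ∀ u : ∀ i : (Iᶜ : Finset Λ), K i,
        (∀ i ∈ A ∩ I, glue K I u a i = x i) ↔ (∀ i : I, (i : Λ) ∈ A → a i = x i) := by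
      intro u
      constructor
      · intro h i hiA
        have := h i (Finset.mem_inter.mpr ⟨hiA, i.2⟩)
        rwa [glue_mem i.2] at this
      · intro h i hi
        obtain ⟨hiA, hiI⟩ := Finset.mem_inter.mp hi
        rw [glue_mem hiI]; exact h ⟨i, hiI⟩ hiA
    rw [Finset.sum_congr rfl (fun u _ => if_congr (hcond u) rfl rfl)]
    by_cases hc : (∀ i : I, (i : Λ) ∈ A → a i = x i)
    · simp only [hF, if_pos hc, marginal_eq_sum_glue]
    · simp only [hF, if_neg hc, Finset.sum_const_zero]
  have sub2 : margOn μ (A \ I) x = ∑ u, G u := by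
    rw [margOn, sum_glue I]
    refine Finset.sum_congr rfl fun u _ => ?_
    have hcond : ∀ a : ∀ i : I, K i,
        (∀ i ∈ A \ I, glue K I u a i = x i)
          ↔ (∀ i : (Iᶜ : Finset Λ), (i : Λ) ∈ A → u i = x i) := by
      intro a
      constructor
      · intro h i hiA
        have hiI : (i : Λ) ∉ I := Finset.mem_compl.mp i.2
        have := h i (Finset.mem_sdiff.mpr ⟨hiA, hiI⟩)
        rw [glue_not_mem hiI] at this
        exact this
      · intro h i hi
        obtain ⟨hiA, hiI⟩ := Finset.mem_sdiff.mp hi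
        rw [glue_not_mem hiI]
        exact h ⟨i, Finset.mem_compl.mpr hiI⟩ hiA
    rw [Finset.sum_congr rfl (fun a _ => if_congr (hcond a) rfl rfl)]
    by_cases hc : (∀ i : (Iᶜ : Finset Λ), (i : Λ) ∈ A → u i = x i)
    · simp only [hG, if_pos hc, marginal_compl_eq_sum_glue]
    · simp only [hG, if_neg hc, Finset.sum_const_zero]
  rw [sub1, sub2, Finset.sum_mul_sum]
  rw [margOn, sum_glue I, Finset.sum_comm]
  refine Finset.sum_congr rfl fun a _ => Finset.sum_congr rfl fun u _ => ?_
  have hμz := hsep (glue K I u a)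
  rw [margOn_eq_marginal, margOn_eq_marginal, restrictW_glue, restrictW_compl_glue] at hμz
  have hcond : (∀ i ∈ A, glue K I u a i = x i)
      ↔ ((∀ i : I, (i : Λ) ∈ A → a i = x i)
          ∧ (∀ i : (Iᶜ : Finset Λ), (i : Λ) ∈ A → u i = x i)) := by
    constructor
    · intro h
      refine ⟨fun i hiA => ?_, fun i hiA => ?_⟩
      · have := h i hiA; rwa [glue_mem i.2] at this
      · have hiI : (i : Λ) ∉ I := Finset.mem_compl.mp i.2
        have := h i hiA; rwa [glue_not_mem hiI] at this
    · rintro ⟨h1, h2⟩ i hiA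
      by_cases hiI : i ∈ I
      · rw [glue_mem hiI]; exact h1 ⟨i, hiI⟩ hiA
      · rw [glue_not_mem hiI]; exact h2 ⟨i, Finset.mem_compl.mpr hiI⟩ hiA
  rw [if_congr hcond rfl rfl, hμz, ite_and_mul]

/-- separation along a coordinate set -/
def SepOn (μ : (∀ i, K i) → ℝ) (M : Finset Λ) : Prop :=
  ∀ x, μ x = margOn μ M x * margOn μ Mᶜ x

lemma SepOn.compl {μ : (∀ i, K i) → ℝ} {M : Finset Λ} (h : SepOn μ M) : SepOn μ Mᶜ := by
  intro x; rw [compl_compl, mul_comm]; exact h x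

lemma sepOn_univ {μ : (∀ i, K i) → ℝ} (hμ : ∑ y : ∀ i, K i, μ y = 1) :
    SepOn μ (Finset.univ : Finset Λ) := by
  intro x
  rw [margOn_univ, Finset.compl_univ, margOn_empty hμ, mul_one]

lemma SepOn.inter {μ : (∀ i, K i) → ℝ} {I J : Finset Λ}
    (hI : SepOn μ I) (hJ : SepOn μ J) : SepOn μ (I ∩ J) := by
  intro x
  have h1 : margOn μ I x = margOn μ (I ∩ J) x * margOn μ (I \ J) x := margOn_split hJ I x
  have hA : (I ∩ J)ᶜ ∩ I = I \ J := by
    ext k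
    simp only [Finset.mem_inter, Finset.mem_compl, Finset.mem_sdiff]
    tauto
  have hB : (I ∩ J)ᶜ \ I = Iᶜ := by
    ext k
    simp only [Finset.mem_sdiff, Finset.mem_compl, Finset.mem_inter]
    tauto
  have h2 : margOn μ (I ∩ J)ᶜ x = margOn μ (I \ J) x * margOn μ Iᶜ x := by
    have := margOn_split hI ((I ∩ J)ᶜ) x
    rwa [hA, hB] at this
  rw [h2, hI x, h1]
  ring

lemma SepOn.inf {μ : (∀ i, K i) → ℝ} (hμ : ∑ y : ∀ i, K i, μ y = 1)
    {γ : Type*} [DecidableEq γ] (s : Finset γ) (f : γ → Finset Λ)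
    (h : ∀ j ∈ s, SepOn μ (f j)) : SepOn μ (s.inf f) := by
  induction s using Finset.induction_on with
  | empty => rw [Finset.inf_empty, Finset.top_eq_univ]; exact sepOn_univ hμ
  | @insert j s hj ih =>
      rw [Finset.inf_insert]
      exact (h j (Finset.mem_insert_self j s)).inter
        (ih (fun k hk => h k (Finset.mem_insert_of_mem hk)))

lemma margOn_prod {μ : (∀ i, K i) → ℝ} (hμ : ∑ y : ∀ i, K i, μ y = 1)
    (h1 : ∀ i : Λ, SepOn μ {i}) (A : Finset Λ) (x : ∀ i, K i) :
    margOn μ A x = ∏ i ∈ A, marg1 K μ i (x i) := by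
  induction A using Finset.induction_on with
  | empty => rw [margOn_empty hμ, Finset.prod_empty]
  | @insert j A hj ih =>
      have h2 : insert j A ∩ {j} = {j} := by
        ext k
        simp only [Finset.mem_inter, Finset.mem_insert, Finset.mem_singleton]
        tauto
      have h3 : insert j A \ {j} = A := by
        ext k
        simp only [Finset.mem_sdiff, Finset.mem_insert, Finset.mem_singleton]
        constructor
        · rintro ⟨h | h, hk⟩
          · exact absurd h hk
          · exact h
        · intro hk
          exact ⟨Or.inr hk, fun he => hj (he ▸ hk)⟩
      rw [margOn_split (h1 j) (insert j A) x, h2, h3, margOn_singleton, ih,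
        Finset.prod_insert hj]

/-- main product decomposition from a T0 separated system -/
theorem eq_prod_of_separated {μ : (∀ i, K i) → ℝ} (hμ : ∑ y : ∀ i, K i, μ y = 1)
    {𝒥 : Finset (Finset Λ)} (hT0 : ∀ i j : Λ, i ≠ j → ∃ I ∈ 𝒥, (i ∈ I ∧ j ∉ I) ∨ (j ∈ I ∧ i ∉ I))
    (hsep : ∀ I ∈ 𝒥, SepOn μ I) (x : ∀ i, K i) :
    μ x = ∏ i, marg1 K μ i (x i) := by
  classical
  have hsingle : ∀ i : Λ, SepOn μ {i} := by
    intro i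
    have hex : ∀ j : Λ, i ≠ j → ∃ C : Finset Λ, SepOn μ C ∧ i ∈ C ∧ j ∉ C := by
      intro j hij
      obtain ⟨I, hI𝒥, hI⟩ := hT0 i j hij
      rcases hI with ⟨hi, hjn⟩ | ⟨hjm, hin⟩
      · exact ⟨I, hsep I hI𝒥, hi, hjn⟩
      · exact ⟨Iᶜ, (hsep I hI𝒥).compl, Finset.mem_compl.mpr hin,
          fun hc => (Finset.mem_compl.mp hc) hjm⟩
    choose C hC1 hC2 hC3 using hex
    set F : Λ → Finset Λ := fun j => if h : i ≠ j then C j h else Finset.univ with hFdef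
    have hFsep : ∀ j, SepOn μ (F j) := by
      intro j
      by_cases h : i ≠ j
      · rw [hFdef]; simp only [dif_pos h]; exact hC1 j h
      · rw [hFdef]; simp only [dif_neg h]; exact sepOn_univ hμ
    have hFi : ∀ j, i ∈ F j := by
      intro j
      by_cases h : i ≠ j
      · rw [hFdef]; simp only [dif_pos h]; exact hC2 j h
      · rw [hFdef]; simp only [dif_neg h]; exact Finset.mem_univ i
    have hinf : (Finset.univ.erase i).inf F = {i} := by
      apply le_antisymm
      · intro k hk
        rw [Finset.mem_singleton]
        by_contra hki
        have hkmem : k ∈ Finset.univ.erase i := Finset.mem_erase.mpr ⟨fun h => hki h, Finset.mem_univ k⟩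
        have hle : (Finset.univ.erase i).inf F ≤ F k := Finset.inf_le hkmem
        have : k ∈ F k := hle hk
        have hik : i ≠ k := fun h => hki h.symm
        rw [hFdef] at this
        simp only [dif_pos hik] at this
        exact hC3 k hik this
      · apply Finset.le_inf
        intro j _
        exact Finset.singleton_subset_iff.mpr (hFi j)
    have := SepOn.inf hμ (Finset.univ.erase i) F (fun j _ => hFsep j)
    rwa [hinf] at this
  rw [← margOn_univ (μ := μ) x, margOn_prod hμ hsingle]


end Glue

section DerivTools

lemma hasDerivWithinAt_unique {f : ℝ → ℝ} {a b c t : ℝ} (ht : t ∈ Set.Ici c)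
    (h1 : HasDerivWithinAt f a (Set.Ici c) t) (h2 : HasDerivWithinAt f b (Set.Ici c) t) :
    a = b := by
  rw [← h1.derivWithin (uniqueDiffOn_Ici c t ht), ← h2.derivWithin (uniqueDiffOn_Ici c t ht)]

lemma monoOn_of_deriv {f g : ℝ → ℝ} {a : ℝ}
    (hf : ∀ t ∈ Set.Ici a, HasDerivWithinAt f (g t) (Set.Ici a) t)
    (hg : ∀ t ∈ Set.Ioi a, 0 ≤ g t) : MonotoneOn f (Set.Ici a) := by
  apply monotoneOn_of_deriv_nonneg (convex_Ici a)
      (fun t ht => (hf t ht).continuousWithinAt)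
  · rw [interior_Ici]
    exact fun t ht =>
      ((hf t (Set.mem_Ici.mpr (le_of_lt (Set.mem_Ioi.mp ht)))).hasDerivAt (Ici_mem_nhds ht)).differentiableAt.differentiableWithinAt
  · rw [interior_Ici]
    intro t ht
    rw [((hf t (Set.mem_Ici.mpr (le_of_lt (Set.mem_Ioi.mp ht)))).hasDerivAt (Ici_mem_nhds ht)).deriv]
    exact hg t ht

lemma antiOn_of_deriv {f g : ℝ → ℝ} {a : ℝ}
    (hf : ∀ t ∈ Set.Ici a, HasDerivWithinAt f (g t) (Set.Ici a) t)
    (hg : ∀ t ∈ Set.Ioi a, g t ≤ 0) : AntitoneOn f (Set.Ici a) := by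
  apply antitoneOn_of_deriv_nonpos (convex_Ici a)
      (fun t ht => (hf t ht).continuousWithinAt)
  · rw [interior_Ici]
    exact fun t ht =>
      ((hf t (Set.mem_Ici.mpr (le_of_lt (Set.mem_Ioi.mp ht)))).hasDerivAt (Ici_mem_nhds ht)).differentiableAt.differentiableWithinAt
  · rw [interior_Ici]
    intro t ht
    rw [((hf t (Set.mem_Ici.mpr (le_of_lt (Set.mem_Ioi.mp ht)))).hasDerivAt (Ici_mem_nhds ht)).deriv]
    exact hg t ht

lemma constOn_of_deriv_zero {f : ℝ → ℝ} {a : ℝ}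
    (hf : ∀ t ∈ Set.Ici a, HasDerivWithinAt f 0 (Set.Ici a) t) :
    ∀ t ∈ Set.Ici a, f t = f a := by
  intro t ht
  have h1 := monoOn_of_deriv hf (fun _ _ => le_refl 0) (Set.self_mem_Ici) ht ht
  have h2 := antiOn_of_deriv hf (fun _ _ => le_refl 0) (Set.self_mem_Ici) ht ht
  exact le_antisymm h2 h1

end DerivTools

section MeasBounds
variable {Λ : Type*} [Fintype Λ] [DecidableEq Λ] {K : Λ → Type*}
    [∀ i, Fintype (K i)] [∀ i, DecidableEq (K i)]

lemma pmf_le_one {μ : (∀ i, K i) → ℝ} (h0 : ∀ x, 0 ≤ μ x) (h1 : ∑ x : ∀ i, K i, μ x = 1)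
    (x : ∀ i, K i) : μ x ≤ 1 := by
  rw [← h1]
  exact Finset.single_le_sum (fun y _ => h0 y) (Finset.mem_univ x)

lemma marginal_nonneg {μ : (∀ i, K i) → ℝ} (h0 : ∀ x, 0 ≤ μ x) (I : Finset Λ)
    (a : ∀ i : I, K i) : 0 ≤ marginal K μ I a := by
  refine Finset.sum_nonneg fun x _ => ?_
  by_cases h : restrictW K I x = a <;> simp [h, h0 x]

lemma marginal_le_sum {μ : (∀ i, K i) → ℝ} (h0 : ∀ x, 0 ≤ μ x) (I : Finset Λ)
    (a : ∀ i : I, K i) : marginal K μ I a ≤ ∑ x : ∀ i, K i, μ x := by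
  refine Finset.sum_le_sum fun x _ => ?_
  by_cases h : restrictW K I x = a <;> simp [h, h0 x]

lemma marginal_le_one {μ : (∀ i, K i) → ℝ} (h0 : ∀ x, 0 ≤ μ x)
    (h1 : ∑ x : ∀ i, K i, μ x = 1) (I : Finset Λ) (a : ∀ i : I, K i) :
    marginal K μ I a ≤ 1 := h1 ▸ marginal_le_sum h0 I a

lemma le_marginal {μ : (∀ i, K i) → ℝ} (h0 : ∀ x, 0 ≤ μ x) (I : Finset Λ)
    (u : ∀ i : (Iᶜ : Finset Λ), K i) (a : ∀ i : I, K i) :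
    μ (glue K I u a) ≤ marginal K μ I a := by
  rw [marginal_eq_sum_glue]
  exact Finset.single_le_sum (f := fun v => μ (glue K I v a)) (fun v _ => h0 _)
    (Finset.mem_univ u)

lemma sum_marginal {μ : (∀ i, K i) → ℝ} (I : Finset Λ) :
    ∑ a : ∀ i : I, K i, marginal K μ I a = ∑ x : ∀ i, K i, μ x := by
  rw [sum_glue I (f := μ), Finset.sum_comm]
  exact Finset.sum_congr rfl fun a _ => marginal_eq_sum_glue μ I a

end MeasBounds

section Dynamics
variable {Λ : Type*} [Fintype Λ] [DecidableEq Λ] {K : Λ → Type*}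
    [∀ i, Fintype (K i)] [∀ i, DecidableEq (K i)]

/-- a crude global bound for the recombination rates -/
noncomputable def Cbound (𝒥 : Finset (Finset Λ))
    (φ : ∀ I : Finset Λ, (∀ i : I, K i) → (∀ i : I, K i) → ℝ) : ℝ :=
  ∑ I ∈ 𝒥, ∑ a : ∀ i : I, K i, ∑ b : ∀ i : I, K i, φ I a b

lemma recombRHS_ge {𝒥 : Finset (Finset Λ)}
    {φ : ∀ I : Finset Λ, (∀ i : I, K i) → (∀ i : I, K i) → ℝ}
    (hφpos : ∀ I ∈ 𝒥, ∀ a b, 0 < φ I a b)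
    {μ : (∀ i, K i) → ℝ} (h0 : ∀ x, 0 ≤ μ x) (h1 : ∑ x : ∀ i, K i, μ x = 1)
    (x : ∀ i, K i) : -(Cbound 𝒥 φ * μ x) ≤ recombRHS K 𝒥 φ μ x := by
  have key : ∀ I ∈ 𝒥, -((∑ a : ∀ i : I, K i, ∑ b : ∀ i : I, K i, φ I a b) * μ x)
      ≤ ∑ y : ∀ i : I, K i,
        (φ I y (restrictW K I x) * marginal K μ I (restrictW K I x) * μ (recombW K I x y)
          - φ I (restrictW K I x) y * marginal K μ I y * μ x) := by
    intro I hI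
    calc -((∑ a : ∀ i : I, K i, ∑ b : ∀ i : I, K i, φ I a b) * μ x)
        ≤ -((∑ y : ∀ i : I, K i, φ I (restrictW K I x) y) * μ x) := by
          apply neg_le_neg
          refine mul_le_mul_of_nonneg_right ?_ (h0 x)
          exact Finset.single_le_sum (f := fun a => ∑ b : ∀ i : I, K i, φ I a b)
            (fun a _ => Finset.sum_nonneg fun b _ => (hφpos I hI a b).le) (Finset.mem_univ _)
      _ = ∑ y : ∀ i : I, K i, -(φ I (restrictW K I x) y * μ x) := by
          rw [Finset.sum_neg_distrib, ← Finset.sum_mul]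
      _ ≤ _ := by
          refine Finset.sum_le_sum fun y _ => ?_
          have hA : 0 ≤ φ I y (restrictW K I x) * marginal K μ I (restrictW K I x)
              * μ (recombW K I x y) :=
            mul_nonneg (mul_nonneg (hφpos I hI _ _).le (marginal_nonneg h0 _ _)) (h0 _)
          have hB : φ I (restrictW K I x) y * marginal K μ I y * μ x
              ≤ φ I (restrictW K I x) y * μ x := by
            have hm1 := marginal_le_one h0 h1 I y
            have hm0 := marginal_nonneg h0 I y
            have hφ := (hφpos I hI (restrictW K I x) y).le
            have hkey := mul_nonneg (mul_nonneg hφ (h0 x)) (sub_nonneg.mpr hm1)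
            nlinarith [hkey]
          linarith
  calc -(Cbound 𝒥 φ * μ x)
      = ∑ I ∈ 𝒥, -((∑ a : ∀ i : I, K i, ∑ b : ∀ i : I, K i, φ I a b) * μ x) := by
        rw [Finset.sum_neg_distrib, ← Finset.sum_mul, Cbound]
    _ ≤ recombRHS K 𝒥 φ μ x := Finset.sum_le_sum key

variable {𝒥 : Finset (Finset Λ)}
    {φ : ∀ I : Finset Λ, (∀ i : I, K i) → (∀ i : I, K i) → ℝ}
    {μ : ℝ → (∀ i, K i) → ℝ}

lemma pos_persist
    (hφpos : ∀ I ∈ 𝒥, ∀ a b, 0 < φ I a b)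
    (hsol : ∀ x, ∀ t ∈ Set.Ici (0 : ℝ),
      HasDerivWithinAt (fun s => μ s x) (recombRHS K 𝒥 φ (μ t) x) (Set.Ici (0 : ℝ)) t)
    (hpmf : ∀ t ∈ Set.Ici (0 : ℝ), IsPMF K (μ t))
    {x : ∀ i, K i} {s t : ℝ} (hs : 0 ≤ s) (hst : s ≤ t) (hpos : 0 < μ s x) :
    0 < μ t x := by
  set C := Cbound 𝒥 φ with hC
  set f : ℝ → ℝ := fun r => μ r x * Real.exp (C * r) with hf
  set g : ℝ → ℝ := fun r => recombRHS K 𝒥 φ (μ r) x * Real.exp (C * r)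
      + μ r x * (Real.exp (C * r) * C) with hg
  have hderiv : ∀ r ∈ Set.Ici s, HasDerivWithinAt f (g r) (Set.Ici s) r := by
    intro r hr
    have hr0 : (0:ℝ) ≤ r := le_trans hs hr
    have h1 : HasDerivWithinAt (fun u => μ u x) (recombRHS K 𝒥 φ (μ r) x) (Set.Ici s) r :=
      (hsol x r hr0).mono (Set.Ici_subset_Ici.mpr hs)
    have h2 : HasDerivAt (fun u : ℝ => Real.exp (C * u)) (Real.exp (C * r) * C) r := by
      have := ((hasDerivAt_id r).const_mul C).exp
      simpa using this
    exact h1.mul h2.hasDerivWithinAt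
  have hmono : MonotoneOn f (Set.Ici s) := by
    apply monoOn_of_deriv hderiv
    intro r hr
    have hr0 : (0:ℝ) ≤ r := le_trans hs (le_of_lt hr)
    have hge := recombRHS_ge hφpos (hpmf r hr0).1 (hpmf r hr0).2 x
    rw [← hC] at hge
    have hE := (Real.exp_pos (C * r)).le
    have hmul : -(C * μ r x) * Real.exp (C * r) ≤ recombRHS K 𝒥 φ (μ r) x * Real.exp (C * r) :=
      mul_le_mul_of_nonneg_right hge hE
    show (0:ℝ) ≤ recombRHS K 𝒥 φ (μ r) x * Real.exp (C * r)
        + μ r x * (Real.exp (C * r) * C)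
    have hzero : -(C * μ r x) * Real.exp (C * r) + μ r x * (Real.exp (C * r) * C) = 0 := by
      ring
    linarith
  have hle : f s ≤ f t := hmono (Set.self_mem_Ici) hst hst
  have hfs : 0 < f s := mul_pos hpos (Real.exp_pos _)
  have hft : 0 < f t := lt_of_lt_of_le hfs hle
  rw [hf] at hft
  simp only [] at hft
  have hft' : 0 < μ t x * Real.exp (C * t) := hft
  by_contra hneg
  push_neg at hneg
  have := mul_nonpos_of_nonpos_of_nonneg hneg (Real.exp_pos (C * t)).le
  linarith [hft']

/-- the eventual support of a solution -/
def Supp (μ : ℝ → (∀ i, K i) → ℝ) : Set (∀ i, K i) := {x | ∃ s, 0 ≤ s ∧ 0 < μ s x}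

lemma not_supp_zero (hpmf : ∀ t ∈ Set.Ici (0 : ℝ), IsPMF K (μ t))
    {x : ∀ i, K i} (hx : x ∉ Supp μ) {t : ℝ} (ht : 0 ≤ t) : μ t x = 0 := by
  have h0 := (hpmf t ht).1 x
  rcases lt_or_eq_of_le h0 with h | h
  · exact absurd ⟨t, ht, h⟩ hx
  · exact h.symm

lemma exists_T
    (hφpos : ∀ I ∈ 𝒥, ∀ a b, 0 < φ I a b)
    (hsol : ∀ x, ∀ t ∈ Set.Ici (0 : ℝ),
      HasDerivWithinAt (fun s => μ s x) (recombRHS K 𝒥 φ (μ t) x) (Set.Ici (0 : ℝ)) t)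
    (hpmf : ∀ t ∈ Set.Ici (0 : ℝ), IsPMF K (μ t)) :
    ∃ T : ℝ, 1 ≤ T ∧ ∀ x ∈ Supp μ, ∀ t, T ≤ t → 0 < μ t x := by
  classical
  set g : (∀ i, K i) → ℝ := fun x => if h : x ∈ Supp μ then Classical.choose h else 0 with hgdef
  refine ⟨1 + ∑ x : ∀ i, K i, |g x|, le_add_of_nonneg_right
      (Finset.sum_nonneg fun x _ => abs_nonneg _), ?_⟩
  intro x hx t ht
  have hspec := Classical.choose_spec hx
  have hgx : g x = Classical.choose hx := by rw [hgdef]; simp [hx]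
  have hbound : g x ≤ t := by
    calc g x ≤ |g x| := le_abs_self _
      _ ≤ ∑ y : ∀ i, K i, |g y| := Finset.single_le_sum (fun y _ => abs_nonneg (g y))
          (Finset.mem_univ x)
      _ ≤ t := by linarith
  refine pos_persist hφpos hsol hpmf ?_ ?_ ?_ (x := x) (s := g x)
  · rw [hgx]; exact hspec.1
  · exact hbound
  · rw [hgx]; exact hspec.2

lemma rhs_zero_off_supp
    (hsol : ∀ x, ∀ t ∈ Set.Ici (0 : ℝ),
      HasDerivWithinAt (fun s => μ s x) (recombRHS K 𝒥 φ (μ t) x) (Set.Ici (0 : ℝ)) t)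
    (hpmf : ∀ t ∈ Set.Ici (0 : ℝ), IsPMF K (μ t))
    {x : ∀ i, K i} (hx : x ∉ Supp μ) {t : ℝ} (ht : (0:ℝ) ≤ t) :
    recombRHS K 𝒥 φ (μ t) x = 0 := by
  have hzero : HasDerivWithinAt (fun s => μ s x) 0 (Set.Ici 0) t := by
    refine (hasDerivWithinAt_const t (Set.Ici (0:ℝ)) (0:ℝ)).congr ?_ ?_
    · exact fun y hy => not_supp_zero hpmf hx hy
    · exact not_supp_zero hpmf hx ht
  exact hasDerivWithinAt_unique ht (hsol x t ht) hzero

lemma flux_zero_off_supp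
    (hφpos : ∀ I ∈ 𝒥, ∀ a b, 0 < φ I a b)
    (hsol : ∀ x, ∀ t ∈ Set.Ici (0 : ℝ),
      HasDerivWithinAt (fun s => μ s x) (recombRHS K 𝒥 φ (μ t) x) (Set.Ici (0 : ℝ)) t)
    (hpmf : ∀ t ∈ Set.Ici (0 : ℝ), IsPMF K (μ t))
    {x : ∀ i, K i} (hx : x ∉ Supp μ) {t : ℝ} (ht : (0:ℝ) ≤ t) :
    ∀ I ∈ 𝒥, ∀ b, marginal K (μ t) I (restrictW K I x) * μ t (recombW K I x b) = 0 := by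
  have h0 := (hpmf t ht).1
  have hμx : μ t x = 0 := not_supp_zero hpmf hx ht
  have hz := rhs_zero_off_supp hsol hpmf hx ht (𝒥 := 𝒥) (φ := φ)
  rw [recombRHS] at hz
  have hz' : ∑ I ∈ 𝒥, ∑ y : ∀ i : I, K i,
      (φ I y (restrictW K I x) * marginal K (μ t) I (restrictW K I x) * μ t (recombW K I x y))
        = 0 := by
    rw [← hz]
    refine Finset.sum_congr rfl fun I _ => Finset.sum_congr rfl fun y _ => ?_
    rw [hμx]; ring
  have hnn : ∀ I ∈ 𝒥, (0:ℝ) ≤ ∑ y : ∀ i : I, K i,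
      (φ I y (restrictW K I x) * marginal K (μ t) I (restrictW K I x) * μ t (recombW K I x y)) :=
    fun I hI => Finset.sum_nonneg fun y _ =>
      mul_nonneg (mul_nonneg (hφpos I hI _ _).le (marginal_nonneg h0 _ _)) (h0 _)
  intro I hI b
  have hI0 := (Finset.sum_eq_zero_iff_of_nonneg hnn).mp hz' I hI
  have hterm := (Finset.sum_eq_zero_iff_of_nonneg (fun y _ =>
      mul_nonneg (mul_nonneg (hφpos I hI _ _).le (marginal_nonneg h0 _ _)) (h0 _))).mp hI0
      b (Finset.mem_univ b)
  have hφne : φ I b (restrictW K I x) ≠ 0 := (hφpos I hI _ _).ne'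
  rw [mul_assoc] at hterm
  exact (mul_eq_zero.mp hterm).resolve_left hφne

end Dynamics

section Conservation
variable {Λ : Type*} [Fintype Λ] [DecidableEq Λ] {K : Λ → Type*}
    [∀ i, Fintype (K i)] [∀ i, DecidableEq (K i)]
variable {𝒥 : Finset (Finset Λ)}
    {φ : ∀ I : Finset Λ, (∀ i : I, K i) → (∀ i : I, K i) → ℝ}

/-- algebraic part: the recombination operator annihilates one-dimensional marginals. -/
lemma sum_rhs_marg1_zero (hφsymm : ∀ I ∈ 𝒥, ∀ a b, φ I a b = φ I b a)
    (ν : (∀ i, K i) → ℝ) (i : Λ) (c : K i) :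
    ∑ x : ∀ i, K i, (if x i = c then recombRHS K 𝒥 φ ν x else 0) = 0 := by
  classical
  have hsplit : ∑ x : ∀ i, K i, (if x i = c then recombRHS K 𝒥 φ ν x else 0)
      = ∑ I ∈ 𝒥, ∑ x : ∀ i, K i, (if x i = c then
          ∑ y : ∀ i : I, K i,
            (φ I y (restrictW K I x) * marginal K ν I (restrictW K I x) * ν (recombW K I x y)
              - φ I (restrictW K I x) y * marginal K ν I y * ν x) else 0) := by
    rw [Finset.sum_comm]
    refine Finset.sum_congr rfl fun x _ => ?_
    rw [recombRHS]
    by_cases h : x i = c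
    · simp [h]
    · simp [h]
  rw [hsplit]
  refine Finset.sum_eq_zero fun I hI => ?_
  -- rewrite over the glue decomposition
  have hglue : ∀ (u : ∀ j : (Iᶜ : Finset Λ), K j) (a : ∀ j : I, K j),
      ∑ y : ∀ j : I, K j,
          (φ I y (restrictW K I (glue K I u a)) * marginal K ν I (restrictW K I (glue K I u a))
              * ν (recombW K I (glue K I u a) y)
            - φ I (restrictW K I (glue K I u a)) y * marginal K ν I y * ν (glue K I u a))
        = ∑ y : ∀ j : I, K j,
          (φ I y a * marginal K ν I a * ν (glue K I u y)
            - φ I a y * marginal K ν I y * ν (glue K I u a)) := by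
    intro u a
    refine Finset.sum_congr rfl fun y _ => ?_
    rw [restrictW_glue, recombW_glue]
  rw [sum_glue I]
  by_cases hiI : i ∈ I
  · -- condition depends only on the I-part; summing over u produces a symmetric expression
    rw [Finset.sum_comm]
    refine Finset.sum_eq_zero fun a _ => ?_
    have hstep : ∀ u : ∀ j : (Iᶜ : Finset Λ), K j,
        (if glue K I u a i = c then
            ∑ y : ∀ j : I, K j,
              (φ I y (restrictW K I (glue K I u a))
                  * marginal K ν I (restrictW K I (glue K I u a))
                  * ν (recombW K I (glue K I u a) y)
                - φ I (restrictW K I (glue K I u a)) y * marginal K ν I y * ν (glue K I u a))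
          else 0)
        = (if a ⟨i, hiI⟩ = c then
            ∑ y : ∀ j : I, K j,
              (φ I y a * marginal K ν I a * ν (glue K I u y)
                - φ I a y * marginal K ν I y * ν (glue K I u a)) else 0) := by
      intro u
      rw [hglue u a, if_congr (by rw [glue_mem hiI]) rfl rfl]
    rw [Finset.sum_congr rfl fun u _ => hstep u]
    by_cases hc : a ⟨i, hiI⟩ = c
    · simp only [if_pos hc]
      rw [Finset.sum_comm]
      refine Finset.sum_eq_zero fun y _ => ?_
      rw [Finset.sum_sub_distrib, ← Finset.mul_sum, ← Finset.mul_sum,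
        ← marginal_eq_sum_glue, ← marginal_eq_sum_glue]
      rw [hφsymm I hI y a]
      ring
    · simp only [if_neg hc, Finset.sum_const_zero]
  · -- condition depends only on the complement part; rename the two recombination variables
    have hiIc : i ∈ Iᶜ := Finset.mem_compl.mpr hiI
    refine Finset.sum_eq_zero fun u _ => ?_
    have hstep : ∀ a : ∀ j : I, K j,
        (if glue K I u a i = c then
            ∑ y : ∀ j : I, K j,
              (φ I y (restrictW K I (glue K I u a))
                  * marginal K ν I (restrictW K I (glue K I u a))
                  * ν (recombW K I (glue K I u a) y)
                - φ I (restrictW K I (glue K I u a)) y * marginal K ν I y * ν (glue K I u a))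
          else 0)
        = (if u ⟨i, hiIc⟩ = c then
            ∑ y : ∀ j : I, K j,
              (φ I y a * marginal K ν I a * ν (glue K I u y)
                - φ I a y * marginal K ν I y * ν (glue K I u a)) else 0) := by
      intro a
      rw [hglue u a, if_congr (by rw [glue_not_mem hiI]) rfl rfl]
    rw [Finset.sum_congr rfl fun a _ => hstep a]
    by_cases hc : u ⟨i, hiIc⟩ = c
    · simp only [if_pos hc]
      rw [Finset.sum_congr rfl fun a _ => Finset.sum_sub_distrib _ _,
        Finset.sum_sub_distrib]
      have hswap : ∑ a : ∀ j : I, K j, ∑ y : ∀ j : I, K j,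
            φ I y a * marginal K ν I a * ν (glue K I u y)
          = ∑ a : ∀ j : I, K j, ∑ y : ∀ j : I, K j,
            φ I a y * marginal K ν I y * ν (glue K I u a) := Finset.sum_comm
      rw [hswap, sub_self]
    · simp only [if_neg hc, Finset.sum_const_zero]

lemma marg1_hasDeriv {μ : ℝ → (∀ i, K i) → ℝ}
    (hsol : ∀ x, ∀ t ∈ Set.Ici (0 : ℝ),
      HasDerivWithinAt (fun s => μ s x) (recombRHS K 𝒥 φ (μ t) x) (Set.Ici (0 : ℝ)) t)
    (i : Λ) (c : K i) {t : ℝ} (ht : t ∈ Set.Ici (0:ℝ)) :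
    HasDerivWithinAt (fun s => marg1 K (μ s) i c)
      (∑ x : ∀ i, K i, (if x i = c then recombRHS K 𝒥 φ (μ t) x else 0))
      (Set.Ici (0:ℝ)) t := by
  have : ∀ x : ∀ i, K i, HasDerivWithinAt (fun s => if x i = c then μ s x else 0)
      (if x i = c then recombRHS K 𝒥 φ (μ t) x else 0) (Set.Ici (0:ℝ)) t := by
    intro x
    by_cases h : x i = c
    · simpa [h] using hsol x t ht
    · simpa [h] using hasDerivWithinAt_const t (Set.Ici (0:ℝ)) (0:ℝ)
  exact HasDerivWithinAt.fun_sum fun x _ => this x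

lemma marg1_const {μ : ℝ → (∀ i, K i) → ℝ}
    (hφsymm : ∀ I ∈ 𝒥, ∀ a b, φ I a b = φ I b a)
    (hsol : ∀ x, ∀ t ∈ Set.Ici (0 : ℝ),
      HasDerivWithinAt (fun s => μ s x) (recombRHS K 𝒥 φ (μ t) x) (Set.Ici (0 : ℝ)) t)
    (i : Λ) (c : K i) {t : ℝ} (ht : (0:ℝ) ≤ t) :
    marg1 K (μ t) i c = marg1 K (μ 0) i c := by
  refine constOn_of_deriv_zero (f := fun s => marg1 K (μ s) i c) (a := 0) ?_ t ht
  intro r hr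
  have h := marg1_hasDeriv hsol i c hr
  rwa [sum_rhs_marg1_zero hφsymm (μ r) i c] at h

end Conservation

section Entropy
variable {Λ : Type*} [Fintype Λ] [DecidableEq Λ] {K : Λ → Type*}
    [∀ i, Fintype (K i)] [∀ i, DecidableEq (K i)]
variable {𝒥 : Finset (Finset Λ)}
    {φ : ∀ I : Finset Λ, (∀ i : I, K i) → (∀ i : I, K i) → ℝ}

/-- Per-frame entropy production identity. -/
lemma entropy_frame {S : Set (∀ i, K i)} [DecidablePred (· ∈ S)]
    {ν : (∀ i, K i) → ℝ} {I : Finset Λ} (hI : I ∈ 𝒥)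
    (hφsymm : ∀ I ∈ 𝒥, ∀ a b, φ I a b = φ I b a)
    (h0 : ∀ x, 0 ≤ ν x)
    (hSpos : ∀ x ∈ S, 0 < ν x)
    (hSzero : ∀ x ∉ S, ν x = 0)
    (hfluxg : ∀ (u : ∀ j : (Iᶜ : Finset Λ), K j) (b : ∀ j : I, K j), glue K I u b ∉ S →
      ∀ b' : ∀ j : I, K j, marginal K ν I b * ν (glue K I u b') = 0) :
    ∑ u : ∀ j : (Iᶜ : Finset Λ), K j, ∑ a : ∀ j : I, K j,
      (if glue K I u a ∈ S then
        (∑ b : ∀ j : I, K j, (φ I b a * marginal K ν I a * ν (glue K I u b)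
          - φ I a b * marginal K ν I b * ν (glue K I u a))) * Real.log (ν (glue K I u a))
       else 0)
    = -(1/2) * ∑ u : ∀ j : (Iᶜ : Finset Λ), K j, ∑ a : ∀ j : I, K j, ∑ b : ∀ j : I, K j,
        (if glue K I u a ∈ S ∧ glue K I u b ∈ S then
          φ I b a * (marginal K ν I a * ν (glue K I u b) - marginal K ν I b * ν (glue K I u a))
            * (Real.log (marginal K ν I a * ν (glue K I u b))
              - Real.log (marginal K ν I b * ν (glue K I u a)))
         else 0) := by
  classical
  -- difference kernel
  set D : (∀ j : (Iᶜ : Finset Λ), K j) → (∀ j : I, K j) → (∀ j : I, K j) → ℝ :=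
    fun u a b => marginal K ν I a * ν (glue K I u b) - marginal K ν I b * ν (glue K I u a)
    with hD
  -- vanishing of D off the support
  have hDzero : ∀ u a b, (glue K I u a ∈ S ∧ glue K I u b ∈ S) → True := fun _ _ _ _ => trivial
  have hD0 : ∀ u a b, glue K I u a ∉ S → D u a b = 0 := by
    intro u a b h
    have h1 : marginal K ν I a * ν (glue K I u b) = 0 := hfluxg u a h b
    have h2 : ν (glue K I u a) = 0 := hSzero _ h
    rw [hD]; simp only []; rw [h1, h2, mul_zero, sub_zero]
  have hD0' : ∀ u a b, glue K I u b ∉ S → D u a b = 0 := by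
    intro u a b h
    have h1 : marginal K ν I b * ν (glue K I u a) = 0 := hfluxg u b h a
    have h2 : ν (glue K I u b) = 0 := hSzero _ h
    rw [hD]; simp only []; rw [h1, h2, mul_zero, zero_sub, neg_eq_zero]
  -- step 1 : turn LHS into a triple sum with double support condition
  have step1 : ∑ u : ∀ j : (Iᶜ : Finset Λ), K j, ∑ a : ∀ j : I, K j,
      (if glue K I u a ∈ S then
        (∑ b : ∀ j : I, K j, (φ I b a * marginal K ν I a * ν (glue K I u b)
          - φ I a b * marginal K ν I b * ν (glue K I u a))) * Real.log (ν (glue K I u a))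
       else 0)
      = ∑ u : ∀ j : (Iᶜ : Finset Λ), K j, ∑ a : ∀ j : I, K j, ∑ b : ∀ j : I, K j,
        (if glue K I u a ∈ S ∧ glue K I u b ∈ S then
          φ I b a * D u a b * Real.log (ν (glue K I u a)) else 0) := by
    refine Finset.sum_congr rfl fun u _ => Finset.sum_congr rfl fun a _ => ?_
    by_cases h1 : glue K I u a ∈ S
    · rw [if_pos h1, Finset.sum_mul]
      refine Finset.sum_congr rfl fun b _ => ?_
      by_cases h2 : glue K I u b ∈ S
      · rw [if_pos ⟨h1, h2⟩, hφsymm I hI a b, hD]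
        ring
      · rw [if_neg (fun hc => h2 hc.2)]
        have e1 : ν (glue K I u b) = 0 := hSzero _ h2
        have e2 : marginal K ν I b * ν (glue K I u a) = 0 := hfluxg u b h2 a
        rw [e1, mul_zero, mul_assoc, e2, mul_zero, sub_zero, zero_mul]
    · rw [if_neg h1]
      exact (Finset.sum_eq_zero fun b _ => if_neg (fun hc => h1 hc.1)).symm
  -- step 2 : the same LHS with the log at the second variable, negated
  have step2 : ∀ u, ∑ a : ∀ j : I, K j, ∑ b : ∀ j : I, K j,
        (if glue K I u a ∈ S ∧ glue K I u b ∈ S then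
          φ I b a * D u a b * Real.log (ν (glue K I u a)) else 0)
      = ∑ a : ∀ j : I, K j, ∑ b : ∀ j : I, K j,
        -(if glue K I u a ∈ S ∧ glue K I u b ∈ S then
          φ I b a * D u a b * Real.log (ν (glue K I u b)) else 0) := by
    intro u
    rw [Finset.sum_comm]
    refine Finset.sum_congr rfl fun a _ => Finset.sum_congr rfl fun b _ => ?_
    by_cases hc : glue K I u a ∈ S ∧ glue K I u b ∈ S
    · rw [if_pos (And.intro hc.2 hc.1), if_pos hc, hφsymm I hI a b, hD]
      simp only []
      ring
    · rw [if_neg (fun hc' => hc ⟨hc'.2, hc'.1⟩), if_neg hc, neg_zero]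
  -- step 3 : 2 * LHS as a symmetric sum
  have step3 : (2:ℝ) * (∑ u : ∀ j : (Iᶜ : Finset Λ), K j, ∑ a : ∀ j : I, K j, ∑ b : ∀ j : I, K j,
        (if glue K I u a ∈ S ∧ glue K I u b ∈ S then
          φ I b a * D u a b * Real.log (ν (glue K I u a)) else 0))
      = ∑ u : ∀ j : (Iᶜ : Finset Λ), K j, ∑ a : ∀ j : I, K j, ∑ b : ∀ j : I, K j,
        (if glue K I u a ∈ S ∧ glue K I u b ∈ S then
          φ I b a * D u a b * (Real.log (ν (glue K I u a)) - Real.log (ν (glue K I u b)))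
         else 0) := by
    have expand : ∀ u a b, (if glue K I u a ∈ S ∧ glue K I u b ∈ S then
          φ I b a * D u a b * (Real.log (ν (glue K I u a)) - Real.log (ν (glue K I u b)))
         else 0)
        = (if glue K I u a ∈ S ∧ glue K I u b ∈ S then
            φ I b a * D u a b * Real.log (ν (glue K I u a)) else 0)
          + -(if glue K I u a ∈ S ∧ glue K I u b ∈ S then
            φ I b a * D u a b * Real.log (ν (glue K I u b)) else 0) := by
      intro u a b
      by_cases hc : glue K I u a ∈ S ∧ glue K I u b ∈ S
      · rw [if_pos hc, if_pos hc, if_pos hc]; ring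
      · rw [if_neg hc, if_neg hc, if_neg hc]; ring
    rw [Finset.sum_congr rfl fun u _ => Finset.sum_congr rfl fun a _ =>
      Finset.sum_congr rfl fun b _ => expand u a b]
    rw [Finset.sum_congr rfl fun u _ => Finset.sum_congr rfl fun a _ =>
      Finset.sum_add_distrib]
    rw [Finset.sum_congr rfl fun u _ => Finset.sum_add_distrib, Finset.sum_add_distrib]
    have := Finset.sum_congr rfl fun u (_ : u ∈ Finset.univ) => step2 u
    rw [← this]
    ring
  -- step 4 : log decomposition
  have step4 : ∀ u a b, (if glue K I u a ∈ S ∧ glue K I u b ∈ S then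
        φ I b a * D u a b * (Real.log (ν (glue K I u a)) - Real.log (ν (glue K I u b)))
       else 0)
      = (if glue K I u a ∈ S ∧ glue K I u b ∈ S then
          φ I b a * D u a b * (Real.log (marginal K ν I b * ν (glue K I u a))
            - Real.log (marginal K ν I a * ν (glue K I u b))) else 0)
        + (if glue K I u a ∈ S ∧ glue K I u b ∈ S then
          φ I b a * D u a b * (Real.log (marginal K ν I a) - Real.log (marginal K ν I b))
         else 0) := by
    intro u a b
    by_cases hc : glue K I u a ∈ S ∧ glue K I u b ∈ S
    · rw [if_pos hc, if_pos hc, if_pos hc]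
      have pa : 0 < ν (glue K I u a) := hSpos _ hc.1
      have pb : 0 < ν (glue K I u b) := hSpos _ hc.2
      have pma : 0 < marginal K ν I a := lt_of_lt_of_le pa (le_marginal h0 I u a)
      have pmb : 0 < marginal K ν I b := lt_of_lt_of_le pb (le_marginal h0 I u b)
      rw [Real.log_mul pmb.ne' pa.ne', Real.log_mul pma.ne' pb.ne']
      ring
    · rw [if_neg hc, if_neg hc, if_neg hc]; ring
  -- step 5 : marginal-log part vanishes
  have step5 : ∑ u : ∀ j : (Iᶜ : Finset Λ), K j, ∑ a : ∀ j : I, K j, ∑ b : ∀ j : I, K j,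
      (if glue K I u a ∈ S ∧ glue K I u b ∈ S then
        φ I b a * D u a b * (Real.log (marginal K ν I a) - Real.log (marginal K ν I b))
       else 0) = 0 := by
    rw [Finset.sum_comm]
    refine Finset.sum_eq_zero fun a _ => ?_
    rw [Finset.sum_comm]
    refine Finset.sum_eq_zero fun b _ => ?_
    have hpull : ∀ u, (if glue K I u a ∈ S ∧ glue K I u b ∈ S then
          φ I b a * D u a b * (Real.log (marginal K ν I a) - Real.log (marginal K ν I b))
         else 0)
        = (φ I b a * (Real.log (marginal K ν I a) - Real.log (marginal K ν I b)))
          * (if glue K I u a ∈ S ∧ glue K I u b ∈ S then D u a b else 0) := by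
      intro u
      by_cases hc : glue K I u a ∈ S ∧ glue K I u b ∈ S
      · rw [if_pos hc, if_pos hc]; ring
      · rw [if_neg hc, if_neg hc]; ring
    rw [Finset.sum_congr rfl fun u _ => hpull u, ← Finset.mul_sum]
    have hdrop : ∑ u : ∀ j : (Iᶜ : Finset Λ), K j,
        (if glue K I u a ∈ S ∧ glue K I u b ∈ S then D u a b else 0)
        = ∑ u : ∀ j : (Iᶜ : Finset Λ), K j, D u a b := by
      refine Finset.sum_congr rfl fun u _ => ?_
      by_cases hc : glue K I u a ∈ S ∧ glue K I u b ∈ S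
      · rw [if_pos hc]
      · rw [if_neg hc]
        rcases not_and_or.mp hc with h | h
        · exact (hD0 u a b h).symm
        · exact (hD0' u a b h).symm
    rw [hdrop]
    have hzero : ∑ u : ∀ j : (Iᶜ : Finset Λ), K j, D u a b = 0 := by
      rw [hD]
      simp only []
      rw [Finset.sum_sub_distrib, ← Finset.mul_sum, ← Finset.mul_sum,
        ← marginal_eq_sum_glue, ← marginal_eq_sum_glue]
      ring
    rw [hzero, mul_zero]
  -- step 6 : the remaining part is the negative of the target sum
  have step6 : ∀ u a b, (if glue K I u a ∈ S ∧ glue K I u b ∈ S then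
        φ I b a * D u a b * (Real.log (marginal K ν I b * ν (glue K I u a))
          - Real.log (marginal K ν I a * ν (glue K I u b))) else 0)
      = -(if glue K I u a ∈ S ∧ glue K I u b ∈ S then
          φ I b a * (marginal K ν I a * ν (glue K I u b) - marginal K ν I b * ν (glue K I u a))
            * (Real.log (marginal K ν I a * ν (glue K I u b))
              - Real.log (marginal K ν I b * ν (glue K I u a))) else 0) := by
    intro u a b
    by_cases hc : glue K I u a ∈ S ∧ glue K I u b ∈ S
    · rw [if_pos hc, if_pos hc, hD]
      simp only []
      ring
    · rw [if_neg hc, if_neg hc, neg_zero]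
  -- assemble
  rw [step1]
  have hsplit : ∑ u : ∀ j : (Iᶜ : Finset Λ), K j, ∑ a : ∀ j : I, K j, ∑ b : ∀ j : I, K j,
      (if glue K I u a ∈ S ∧ glue K I u b ∈ S then
        φ I b a * D u a b * (Real.log (ν (glue K I u a)) - Real.log (ν (glue K I u b)))
       else 0)
      = (∑ u : ∀ j : (Iᶜ : Finset Λ), K j, ∑ a : ∀ j : I, K j, ∑ b : ∀ j : I, K j,
          (if glue K I u a ∈ S ∧ glue K I u b ∈ S then
            φ I b a * D u a b * (Real.log (marginal K ν I b * ν (glue K I u a))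
              - Real.log (marginal K ν I a * ν (glue K I u b))) else 0))
        + (∑ u : ∀ j : (Iᶜ : Finset Λ), K j, ∑ a : ∀ j : I, K j, ∑ b : ∀ j : I, K j,
          (if glue K I u a ∈ S ∧ glue K I u b ∈ S then
            φ I b a * D u a b * (Real.log (marginal K ν I a) - Real.log (marginal K ν I b))
           else 0)) := by
    rw [Finset.sum_congr rfl fun u _ => Finset.sum_congr rfl fun a _ =>
      Finset.sum_congr rfl fun b _ => step4 u a b]
    rw [Finset.sum_congr rfl fun u _ => Finset.sum_congr rfl fun a _ =>
      Finset.sum_add_distrib]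
    rw [Finset.sum_congr rfl fun u _ => Finset.sum_add_distrib, Finset.sum_add_distrib]
  have hneg : ∑ u : ∀ j : (Iᶜ : Finset Λ), K j, ∑ a : ∀ j : I, K j, ∑ b : ∀ j : I, K j,
      (if glue K I u a ∈ S ∧ glue K I u b ∈ S then
        φ I b a * D u a b * (Real.log (marginal K ν I b * ν (glue K I u a))
          - Real.log (marginal K ν I a * ν (glue K I u b))) else 0)
      = -∑ u : ∀ j : (Iᶜ : Finset Λ), K j, ∑ a : ∀ j : I, K j, ∑ b : ∀ j : I, K j,
        (if glue K I u a ∈ S ∧ glue K I u b ∈ S then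
          φ I b a * (marginal K ν I a * ν (glue K I u b) - marginal K ν I b * ν (glue K I u a))
            * (Real.log (marginal K ν I a * ν (glue K I u b))
              - Real.log (marginal K ν I b * ν (glue K I u a))) else 0) := by
    rw [Finset.sum_congr rfl fun u _ => Finset.sum_congr rfl fun a _ =>
      Finset.sum_congr rfl fun b _ => step6 u a b]
    rw [Finset.sum_congr rfl fun u _ => Finset.sum_congr rfl fun a _ =>
      Finset.sum_neg_distrib _]
    rw [Finset.sum_congr rfl fun u _ => Finset.sum_neg_distrib _, Finset.sum_neg_distrib]
  rw [hsplit, step5, add_zero, hneg] at step3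
  linarith

/-- Global entropy production identity. -/
lemma entropy_identity {S : Set (∀ i, K i)} [DecidablePred (· ∈ S)]
    {ν : (∀ i, K i) → ℝ}
    (hφsymm : ∀ I ∈ 𝒥, ∀ a b, φ I a b = φ I b a)
    (h0 : ∀ x, 0 ≤ ν x)
    (hSpos : ∀ x ∈ S, 0 < ν x)
    (hSzero : ∀ x ∉ S, ν x = 0)
    (hflux : ∀ x ∉ S, ∀ I ∈ 𝒥, ∀ b,
      marginal K ν I (restrictW K I x) * ν (recombW K I x b) = 0) :
    ∑ x : ∀ i, K i, (if x ∈ S then recombRHS K 𝒥 φ ν x * Real.log (ν x) else 0)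
    = -(1/2) * ∑ I ∈ 𝒥, ∑ u : ∀ j : (Iᶜ : Finset Λ), K j, ∑ a : ∀ j : I, K j,
        ∑ b : ∀ j : I, K j,
        (if glue K I u a ∈ S ∧ glue K I u b ∈ S then
          φ I b a * (marginal K ν I a * ν (glue K I u b) - marginal K ν I b * ν (glue K I u a))
            * (Real.log (marginal K ν I a * ν (glue K I u b))
              - Real.log (marginal K ν I b * ν (glue K I u a)))
         else 0) := by
  classical
  have hout : ∑ x : ∀ i, K i, (if x ∈ S then recombRHS K 𝒥 φ ν x * Real.log (ν x) else 0)
      = ∑ I ∈ 𝒥, ∑ x : ∀ i, K i, (if x ∈ S then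
          (∑ y : ∀ j : I, K j,
            (φ I y (restrictW K I x) * marginal K ν I (restrictW K I x) * ν (recombW K I x y)
              - φ I (restrictW K I x) y * marginal K ν I y * ν x)) * Real.log (ν x) else 0) := by
    rw [Finset.sum_comm]
    refine Finset.sum_congr rfl fun x _ => ?_
    by_cases h : x ∈ S
    · simp only [if_pos h, recombRHS, Finset.sum_mul]
    · simp only [if_neg h, Finset.sum_const_zero]
  rw [hout, Finset.mul_sum]
  refine Finset.sum_congr rfl fun I hI => ?_
  have hfluxg : ∀ (u : ∀ j : (Iᶜ : Finset Λ), K j) (b : ∀ j : I, K j), glue K I u b ∉ S →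
      ∀ b' : ∀ j : I, K j, marginal K ν I b * ν (glue K I u b') = 0 := by
    intro u b hb b'
    have := hflux (glue K I u b) hb I hI b'
    rwa [restrictW_glue, recombW_glue] at this
  have := entropy_frame hI hφsymm h0 hSpos hSzero hfluxg (S := S) (ν := ν)
  rw [← this, sum_glue I]
  refine Finset.sum_congr rfl fun u _ => Finset.sum_congr rfl fun a _ => ?_
  by_cases h : glue K I u a ∈ S
  · rw [if_pos h, if_pos h]
    congr 1
    refine Finset.sum_congr rfl fun y _ => ?_
    rw [restrictW_glue, recombW_glue]
  · rw [if_neg h, if_neg h]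

/-- elementary inequality : log p - log q ≥ p - q for 0 < q ≤ p ≤ 1 -/
lemma log_ineq {p q : ℝ} (hq : 0 < q) (hp1 : p ≤ 1) (hqp : q ≤ p) :
    p - q ≤ Real.log p - Real.log q := by
  have hp0 : 0 < p := lt_of_lt_of_le hq hqp
  have h1 : Real.log (q / p) ≤ q / p - 1 := Real.log_le_sub_one_of_pos (div_pos hq hp0)
  rw [Real.log_div hq.ne' hp0.ne'] at h1
  have h4 : (p - q) / p = (p - q) + (p - q) * (1 - p) / p := by
    field_simp
    ring
  have h5 : (0:ℝ) ≤ (p - q) * (1 - p) / p :=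
    div_nonneg (mul_nonneg (sub_nonneg.mpr hqp) (sub_nonneg.mpr hp1)) hp0.le
  have h6 : q / p - 1 = -((p - q) / p) := by field_simp; ring
  linarith

/-- (p-q)^2 ≤ (p-q) (log p - log q) for p, q ∈ (0,1] -/
lemma sq_le_mul_log {p q : ℝ} (hp : 0 < p) (hp1 : p ≤ 1) (hq : 0 < q) (hq1 : q ≤ 1) :
    (p - q)^2 ≤ (p - q) * (Real.log p - Real.log q) := by
  rcases le_total q p with h | h
  · have h1 := log_ineq hq hp1 h
    have h2 : 0 ≤ p - q := sub_nonneg.mpr h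
    nlinarith
  · have h1 := log_ineq hp hq1 h
    have h2 : 0 ≤ q - p := sub_nonneg.mpr h
    nlinarith

lemma mul_log_nonneg' {p q : ℝ} (hp : 0 < p) (hq : 0 < q) :
    0 ≤ (p - q) * (Real.log p - Real.log q) := by
  rcases le_total q p with h | h
  · exact mul_nonneg (sub_nonneg.mpr h) (sub_nonneg.mpr (Real.log_le_log hq h))
  · have := Real.log_le_log hp h
    have h1 : p - q ≤ 0 := sub_nonpos.mpr h
    have h2 : Real.log p - Real.log q ≤ 0 := sub_nonpos.mpr this
    nlinarith

end Entropy

section Lyapunov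
variable {Λ : Type*} [Fintype Λ] [DecidableEq Λ] {K : Λ → Type*}
    [∀ i, Fintype (K i)] [∀ i, DecidableEq (K i)]
variable {𝒥 : Finset (Finset Λ)}
    {φ : ∀ I : Finset Λ, (∀ i : I, K i) → (∀ i : I, K i) → ℝ}

/-- entropy-type functional restricted to a support set -/
noncomputable def Hent (S : Set (∀ i, K i)) [DecidablePred (· ∈ S)]
    (ν : (∀ i, K i) → ℝ) : ℝ :=
  ∑ x : ∀ i, K i, if x ∈ S then ν x * Real.log (ν x) else 0

/-- entropy production functional -/
noncomputable def GFsum (𝒥 : Finset (Finset Λ))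
    (φ : ∀ I : Finset Λ, (∀ i : I, K i) → (∀ i : I, K i) → ℝ)
    (S : Set (∀ i, K i)) [DecidablePred (· ∈ S)] (ν : (∀ i, K i) → ℝ) : ℝ :=
  ∑ I ∈ 𝒥, ∑ u : ∀ j : (Iᶜ : Finset Λ), K j, ∑ a : ∀ j : I, K j, ∑ b : ∀ j : I, K j,
    (if glue K I u a ∈ S ∧ glue K I u b ∈ S then
      φ I b a * (marginal K ν I a * ν (glue K I u b) - marginal K ν I b * ν (glue K I u a))
        * (Real.log (marginal K ν I a * ν (glue K I u b))
          - Real.log (marginal K ν I b * ν (glue K I u a)))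
     else 0)

lemma GFsum_nonneg {S : Set (∀ i, K i)} [DecidablePred (· ∈ S)] {ν : (∀ i, K i) → ℝ}
    (hφpos : ∀ I ∈ 𝒥, ∀ a b, 0 < φ I a b)
    (h0 : ∀ x, 0 ≤ ν x) (hSpos : ∀ x ∈ S, 0 < ν x) :
    0 ≤ GFsum 𝒥 φ S ν := by
  refine Finset.sum_nonneg fun I hI => Finset.sum_nonneg fun u _ =>
    Finset.sum_nonneg fun a _ => Finset.sum_nonneg fun b _ => ?_
  by_cases hc : glue K I u a ∈ S ∧ glue K I u b ∈ S
  · rw [if_pos hc]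
    have pa : 0 < ν (glue K I u a) := hSpos _ hc.1
    have pb : 0 < ν (glue K I u b) := hSpos _ hc.2
    have pma : 0 < marginal K ν I a := lt_of_lt_of_le pa (le_marginal h0 I u a)
    have pmb : 0 < marginal K ν I b := lt_of_lt_of_le pb (le_marginal h0 I u b)
    have hkey := mul_log_nonneg' (mul_pos pma pb) (mul_pos pmb pa)
    have := mul_nonneg (hφpos I hI b a).le hkey
    calc (0:ℝ) ≤ φ I b a * ((marginal K ν I a * ν (glue K I u b)
          - marginal K ν I b * ν (glue K I u a))
        * (Real.log (marginal K ν I a * ν (glue K I u b))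
          - Real.log (marginal K ν I b * ν (glue K I u a)))) := this
      _ = _ := by ring
  · rw [if_neg hc]

variable {μ : ℝ → (∀ i, K i) → ℝ}

lemma sum_rhs_zero
    (hsol : ∀ x, ∀ t ∈ Set.Ici (0 : ℝ),
      HasDerivWithinAt (fun s => μ s x) (recombRHS K 𝒥 φ (μ t) x) (Set.Ici (0 : ℝ)) t)
    (hpmf : ∀ t ∈ Set.Ici (0 : ℝ), IsPMF K (μ t))
    {t : ℝ} (ht : (0:ℝ) ≤ t) :
    ∑ x : ∀ i, K i, recombRHS K 𝒥 φ (μ t) x = 0 := by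
  have h1 : HasDerivWithinAt (fun s => ∑ x : ∀ i, K i, μ s x)
      (∑ x : ∀ i, K i, recombRHS K 𝒥 φ (μ t) x) (Set.Ici 0) t :=
    HasDerivWithinAt.fun_sum fun x _ => hsol x t ht
  have h2 : HasDerivWithinAt (fun s => ∑ x : ∀ i, K i, μ s x) 0 (Set.Ici 0) t := by
    refine (hasDerivWithinAt_const t (Set.Ici (0:ℝ)) (1:ℝ)).congr ?_ ?_
    · exact fun y hy => (hpmf y hy).2
    · exact (hpmf t ht).2
  exact hasDerivWithinAt_unique ht h1 h2

lemma Hent_hasDeriv [DecidablePred (· ∈ Supp μ)]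
    (hφpos : ∀ I ∈ 𝒥, ∀ a b, 0 < φ I a b)
    (hφsymm : ∀ I ∈ 𝒥, ∀ a b, φ I a b = φ I b a)
    (hsol : ∀ x, ∀ t ∈ Set.Ici (0 : ℝ),
      HasDerivWithinAt (fun s => μ s x) (recombRHS K 𝒥 φ (μ t) x) (Set.Ici (0 : ℝ)) t)
    (hpmf : ∀ t ∈ Set.Ici (0 : ℝ), IsPMF K (μ t))
    {T : ℝ} (hT1 : 1 ≤ T) (hTpos : ∀ x ∈ Supp μ, ∀ t, T ≤ t → 0 < μ t x)
    {t : ℝ} (ht : t ∈ Set.Ici T) :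
    HasDerivWithinAt (fun s => Hent (Supp μ) (μ s))
      (-(1/2) * GFsum 𝒥 φ (Supp μ) (μ t)) (Set.Ici T) t := by
  have ht0 : (0:ℝ) ≤ t := le_trans (le_trans zero_le_one hT1) ht
  have hderiv : HasDerivWithinAt (fun s => Hent (Supp μ) (μ s))
      (∑ x : ∀ i, K i, if x ∈ Supp μ then
        (recombRHS K 𝒥 φ (μ t) x * Real.log (μ t x)
          + μ t x * ((μ t x)⁻¹ * recombRHS K 𝒥 φ (μ t) x)) else 0) (Set.Ici T) t := by
    refine HasDerivWithinAt.fun_sum fun x _ => ?_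
    by_cases hx : x ∈ Supp μ
    · simp only [if_pos hx]
      have hpos : 0 < μ t x := hTpos x hx t ht
      have hμ : HasDerivWithinAt (fun s => μ s x) (recombRHS K 𝒥 φ (μ t) x)
          (Set.Ici T) t :=
        (hsol x t ht0).mono (Set.Ici_subset_Ici.mpr (le_trans zero_le_one hT1))
      have hlog : HasDerivWithinAt (fun s => Real.log (μ s x))
          ((μ t x)⁻¹ * recombRHS K 𝒥 φ (μ t) x) (Set.Ici T) t :=
        by have h := (Real.hasDerivAt_log hpos.ne').comp_hasDerivWithinAt t hμ; exact h
      exact hμ.mul hlog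
    · simp only [if_neg hx]
      exact hasDerivWithinAt_const t _ (0:ℝ)
  have heq : (∑ x : ∀ i, K i, if x ∈ Supp μ then
        (recombRHS K 𝒥 φ (μ t) x * Real.log (μ t x)
          + μ t x * ((μ t x)⁻¹ * recombRHS K 𝒥 φ (μ t) x)) else 0)
      = -(1/2) * GFsum 𝒥 φ (Supp μ) (μ t) := by
    have hsplit : ∀ x : ∀ i, K i, (if x ∈ Supp μ then
          (recombRHS K 𝒥 φ (μ t) x * Real.log (μ t x)
            + μ t x * ((μ t x)⁻¹ * recombRHS K 𝒥 φ (μ t) x)) else 0)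
        = (if x ∈ Supp μ then recombRHS K 𝒥 φ (μ t) x * Real.log (μ t x) else 0)
          + (if x ∈ Supp μ then recombRHS K 𝒥 φ (μ t) x else 0) := by
      intro x
      by_cases hx : x ∈ Supp μ
      · have hpos : 0 < μ t x := hTpos x hx t ht
        rw [if_pos hx, if_pos hx, if_pos hx]
        field_simp
      · rw [if_neg hx, if_neg hx, if_neg hx, add_zero]
    rw [Finset.sum_congr rfl fun x _ => hsplit x, Finset.sum_add_distrib]
    have hzero : (∑ x : ∀ i, K i, if x ∈ Supp μ then recombRHS K 𝒥 φ (μ t) x else 0) = 0 := by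
      have : ∀ x : ∀ i, K i, (if x ∈ Supp μ then recombRHS K 𝒥 φ (μ t) x else 0)
          = recombRHS K 𝒥 φ (μ t) x := by
        intro x
        by_cases hx : x ∈ Supp μ
        · rw [if_pos hx]
        · rw [if_neg hx, rhs_zero_off_supp hsol hpmf hx ht0]
      rw [Finset.sum_congr rfl fun x _ => this x]
      exact sum_rhs_zero hsol hpmf ht0
    rw [hzero, add_zero]
    have hident := entropy_identity (S := Supp μ) (ν := μ t) hφsymm (hpmf t ht0).1
        (fun x hx => hTpos x hx t ht) (fun x hx => not_supp_zero hpmf hx ht0)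
        (fun x hx => flux_zero_off_supp hφpos hsol hpmf hx ht0)
    rw [hident, GFsum]
  rwa [heq] at hderiv

lemma Hent_lower {S : Set (∀ i, K i)} [DecidablePred (· ∈ S)] {ν : (∀ i, K i) → ℝ}
    (h0 : ∀ x, 0 ≤ ν x) (h1 : ∑ x : ∀ i, K i, ν x = 1) :
    -(Fintype.card (∀ i, K i) : ℝ) ≤ Hent S ν := by
  have key : ∀ x : ∀ i, K i, -1 ≤ (if x ∈ S then ν x * Real.log (ν x) else 0) := by
    intro x
    by_cases hx : x ∈ S
    · rw [if_pos hx]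
      rcases eq_or_lt_of_le (h0 x) with h | h
      · rw [← h]; norm_num
      · have hlog : Real.log (ν x)⁻¹ ≤ (ν x)⁻¹ - 1 :=
          Real.log_le_sub_one_of_pos (inv_pos.mpr h)
        rw [Real.log_inv] at hlog
        have : ν x - 1 ≤ ν x * Real.log (ν x) := by
          have h2 := mul_le_mul_of_nonneg_left hlog h.le
          have h3 : ν x * ((ν x)⁻¹ - 1) = 1 - ν x := by field_simp
          nlinarith
        have hle1 := pmf_le_one h0 h1 x
        linarith
    · rw [if_neg hx]; norm_num
  calc -(Fintype.card (∀ i, K i) : ℝ)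
      = ∑ _x : ∀ i, K i, (-1 : ℝ) := by
        rw [Finset.sum_const, Finset.card_univ, nsmul_eq_mul]; ring
    _ ≤ Hent S ν := Finset.sum_le_sum fun x _ => key x

lemma Hent_antitone [DecidablePred (· ∈ Supp μ)]
    (hφpos : ∀ I ∈ 𝒥, ∀ a b, 0 < φ I a b)
    (hφsymm : ∀ I ∈ 𝒥, ∀ a b, φ I a b = φ I b a)
    (hsol : ∀ x, ∀ t ∈ Set.Ici (0 : ℝ),
      HasDerivWithinAt (fun s => μ s x) (recombRHS K 𝒥 φ (μ t) x) (Set.Ici (0 : ℝ)) t)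
    (hpmf : ∀ t ∈ Set.Ici (0 : ℝ), IsPMF K (μ t))
    {T : ℝ} (hT1 : 1 ≤ T) (hTpos : ∀ x ∈ Supp μ, ∀ t, T ≤ t → 0 < μ t x) :
    AntitoneOn (fun s => Hent (Supp μ) (μ s)) (Set.Ici T) := by
  refine antiOn_of_deriv (g := fun t => -(1/2) * GFsum 𝒥 φ (Supp μ) (μ t))
    (fun t ht => Hent_hasDeriv hφpos hφsymm hsol hpmf hT1 hTpos ht) ?_
  intro t ht
  have ht' : T ≤ t := le_of_lt ht
  have ht0 : (0:ℝ) ≤ t := le_trans (le_trans zero_le_one hT1) ht'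
  have := GFsum_nonneg (S := Supp μ) (ν := μ t) hφpos (hpmf t ht0).1
    (fun x hx => hTpos x hx t ht')
  linarith

lemma exists_GF_small [DecidablePred (· ∈ Supp μ)]
    (hφpos : ∀ I ∈ 𝒥, ∀ a b, 0 < φ I a b)
    (hφsymm : ∀ I ∈ 𝒥, ∀ a b, φ I a b = φ I b a)
    (hsol : ∀ x, ∀ t ∈ Set.Ici (0 : ℝ),
      HasDerivWithinAt (fun s => μ s x) (recombRHS K 𝒥 φ (μ t) x) (Set.Ici (0 : ℝ)) t)
    (hpmf : ∀ t ∈ Set.Ici (0 : ℝ), IsPMF K (μ t))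
    {T : ℝ} (hT1 : 1 ≤ T) (hTpos : ∀ x ∈ Supp μ, ∀ t, T ≤ t → 0 < μ t x) :
    ∀ ε > (0:ℝ), ∀ N : ℝ, ∃ t, N ≤ t ∧ T ≤ t ∧ GFsum 𝒥 φ (Supp μ) (μ t) < ε := by
  by_contra hcon
  push_neg at hcon
  obtain ⟨ε, hε, N, hN⟩ := hcon
  set M := max N T with hM
  have hMT : T ≤ M := le_max_right N T
  have hM0 : (0:ℝ) ≤ M := le_trans (le_trans zero_le_one hT1) hMT
  have hGF : ∀ t, M ≤ t → ε ≤ GFsum 𝒥 φ (Supp μ) (μ t) := by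
    intro t ht
    exact hN t (le_trans (le_max_left N T) ht) (le_trans hMT ht)
  set B := (Fintype.card (∀ i, K i) : ℝ) with hB
  set f : ℝ → ℝ := fun s => Hent (Supp μ) (μ s) + (ε/2) * s with hf
  have hfderiv : ∀ s ∈ Set.Ici M, HasDerivWithinAt f
      (-(1/2) * GFsum 𝒥 φ (Supp μ) (μ s) + ε/2) (Set.Ici M) s := by
    intro s hs
    have h1 : HasDerivWithinAt (fun r => Hent (Supp μ) (μ r))
        (-(1/2) * GFsum 𝒥 φ (Supp μ) (μ s)) (Set.Ici M) s :=
      (Hent_hasDeriv hφpos hφsymm hsol hpmf hT1 hTpos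
        (le_trans hMT hs)).mono (Set.Ici_subset_Ici.mpr hMT)
    have h2 : HasDerivWithinAt (fun r : ℝ => (ε/2) * r) (ε/2) (Set.Ici M) s := by
      simpa using (hasDerivWithinAt_id s (Set.Ici M)).const_mul (ε/2)
    exact h1.add h2
  have hanti : AntitoneOn f (Set.Ici M) := by
    refine antiOn_of_deriv hfderiv ?_
    intro s hs
    have := hGF s (le_of_lt hs)
    linarith
  set t := M + (2/ε) * (Hent (Supp μ) (μ M) + B + 1) with htdef
  have hHB : -B ≤ Hent (Supp μ) (μ M) := Hent_lower (hpmf M hM0).1 (hpmf M hM0).2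
  have hMt : M ≤ t := by
    rw [htdef]
    have : (0:ℝ) ≤ (2/ε) * (Hent (Supp μ) (μ M) + B + 1) := by
      apply mul_nonneg (by positivity)
      linarith
    linarith
  have hft : f t ≤ f M := hanti (Set.self_mem_Ici) hMt hMt
  have ht0 : (0:ℝ) ≤ t := le_trans hM0 hMt
  have hHtB : -B ≤ Hent (Supp μ) (μ t) := Hent_lower (hpmf t ht0).1 (hpmf t ht0).2
  rw [hf] at hft
  simp only [] at hft
  have hcompute : (ε/2) * t - (ε/2) * M = Hent (Supp μ) (μ M) + B + 1 := by
    rw [htdef]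
    field_simp
    ring
  linarith

lemma exists_seq_GF [DecidablePred (· ∈ Supp μ)]
    (hφpos : ∀ I ∈ 𝒥, ∀ a b, 0 < φ I a b)
    (hφsymm : ∀ I ∈ 𝒥, ∀ a b, φ I a b = φ I b a)
    (hsol : ∀ x, ∀ t ∈ Set.Ici (0 : ℝ),
      HasDerivWithinAt (fun s => μ s x) (recombRHS K 𝒥 φ (μ t) x) (Set.Ici (0 : ℝ)) t)
    (hpmf : ∀ t ∈ Set.Ici (0 : ℝ), IsPMF K (μ t))
    {T : ℝ} (hT1 : 1 ≤ T) (hTpos : ∀ x ∈ Supp μ, ∀ t, T ≤ t → 0 < μ t x) :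
    ∃ tseq : ℕ → ℝ, (∀ n, T ≤ tseq n ∧ (n:ℝ) ≤ tseq n)
      ∧ Filter.Tendsto (fun n => GFsum 𝒥 φ (Supp μ) (μ (tseq n))) Filter.atTop (𝓝 0) := by
  have hex : ∀ n : ℕ, ∃ t, (n:ℝ) ≤ t ∧ T ≤ t ∧ GFsum 𝒥 φ (Supp μ) (μ t) < 1/(n+1) := by
    intro n
    exact exists_GF_small hφpos hφsymm hsol hpmf hT1 hTpos (1/(n+1)) (by positivity) n
  choose tseq h1 h2 h3 using hex
  refine ⟨tseq, fun n => ⟨h2 n, h1 n⟩, ?_⟩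
  have hub : ∀ n, GFsum 𝒥 φ (Supp μ) (μ (tseq n)) ≤ 1/((n:ℝ)+1) := fun n => (h3 n).le
  have hlb : ∀ n, (0:ℝ) ≤ GFsum 𝒥 φ (Supp μ) (μ (tseq n)) := by
    intro n
    have ht0 : (0:ℝ) ≤ tseq n := le_trans (le_trans zero_le_one hT1) (h2 n)
    exact GFsum_nonneg hφpos (hpmf (tseq n) ht0).1 (fun x hx => hTpos x hx (tseq n) (h2 n))
  exact tendsto_of_tendsto_of_tendsto_of_le_of_le tendsto_const_nhds
    tendsto_one_div_add_atTop_nhds_zero_nat hlb hub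

end Lyapunov

section Limits
variable {Λ : Type*} [Fintype Λ] [DecidableEq Λ] {K : Λ → Type*}
    [∀ i, Fintype (K i)] [∀ i, DecidableEq (K i)]

/-- uniqueness of limits of an eventually-antitone function along two sequences tending to ∞ -/
lemma antitone_limit_unique {f : ℝ → ℝ} {T : ℝ} (hf : AntitoneOn f (Set.Ici T))
    {u v : ℕ → ℝ} (huT : ∀ n, T ≤ u n) (hvT : ∀ n, T ≤ v n)
    (hu : Filter.Tendsto u Filter.atTop Filter.atTop)
    (hv : Filter.Tendsto v Filter.atTop Filter.atTop)
    {A B : ℝ} (hA : Filter.Tendsto (fun n => f (u n)) Filter.atTop (𝓝 A))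
    (hB : Filter.Tendsto (fun n => f (v n)) Filter.atTop (𝓝 B)) : A = B := by
  have h1 : B ≤ A := by
    have hBA : ∀ n : ℕ, B ≤ f (u n) := by
      intro n
      refine le_of_tendsto hB ?_
      filter_upwards [hv.eventually_ge_atTop (u n)] with m hm
      exact hf (huT n) (hvT m) hm
    exact ge_of_tendsto hA (Filter.Eventually.of_forall hBA)
  have h2 : A ≤ B := by
    have hAB : ∀ n : ℕ, A ≤ f (v n) := by
      intro n
      refine le_of_tendsto hA ?_
      filter_upwards [hu.eventually_ge_atTop (v n)] with m hm
      exact hf (hvT n) (huT m) hm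
    exact ge_of_tendsto hB (Filter.Eventually.of_forall hAB)
  exact le_antisymm h2 h1

/-- extraction of a pointwise-converging subsequence of measures -/
lemma exists_limit_measure {μ : ℝ → (∀ i, K i) → ℝ}
    (hpmf : ∀ t ∈ Set.Ici (0 : ℝ), IsPMF K (μ t))
    (sn : ℕ → ℝ) (hsn : ∀ n, 0 ≤ sn n) :
    ∃ (ν : (∀ i, K i) → ℝ) (ψ : ℕ → ℕ), StrictMono ψ
      ∧ ∀ x, Filter.Tendsto (fun n => μ (sn (ψ n)) x) Filter.atTop (𝓝 (ν x)) := by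
  have hcompact : IsCompact (Set.univ.pi fun _ : (∀ i, K i) => Set.Icc (0:ℝ) 1) :=
    isCompact_univ_pi fun _ => isCompact_Icc
  have hmem : ∀ n : ℕ, (fun x => μ (sn n) x) ∈ Set.univ.pi fun _ : (∀ i, K i) => Set.Icc (0:ℝ) 1 := by
    intro n
    intro x _
    exact ⟨(hpmf (sn n) (hsn n)).1 x, pmf_le_one (hpmf (sn n) (hsn n)).1 (hpmf (sn n) (hsn n)).2 x⟩
  obtain ⟨ν, _, ψ, hψ, hconv⟩ := hcompact.tendsto_subseq hmem
  refine ⟨ν, ψ, hψ, ?_⟩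
  rw [tendsto_pi_nhds] at hconv
  exact hconv

lemma le_marg1 {ρ : (∀ i, K i) → ℝ} (h0 : ∀ x, 0 ≤ ρ x) (i : Λ) (x : ∀ i, K i) :
    ρ x ≤ marg1 K ρ i (x i) := by
  rw [marg1]
  have := Finset.single_le_sum (f := fun y => if y i = x i then ρ y else 0)
    (fun y _ => by by_cases h : y i = x i <;> simp [h, h0 y]) (Finset.mem_univ x)
  simpa using this

lemma marg1_nonneg {ρ : (∀ i, K i) → ℝ} (h0 : ∀ x, 0 ≤ ρ x) (i : Λ) (c : K i) :
    0 ≤ marg1 K ρ i c :=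
  Finset.sum_nonneg fun y _ => by by_cases h : y i = c <;> simp [h, h0 y]

/-- computation of the cross entropy against a product measure with the same marginals -/
lemma sum_mul_log_prod {ρ q : (∀ i, K i) → ℝ} (hρ0 : ∀ x, 0 ≤ ρ x)
    (hm : ∀ (i : Λ) (c : K i), marg1 K ρ i c = marg1 K q i c)
    (hq : ∀ x, q x = ∏ i, marg1 K q i (x i)) :
    ∑ x : ∀ i, K i, ρ x * Real.log (q x)
      = ∑ i : Λ, ∑ c : K i, marg1 K q i c * Real.log (marg1 K q i c) := by
  classical
  have step1 : ∀ x : ∀ i, K i, ρ x * Real.log (q x)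
      = ∑ i : Λ, ρ x * Real.log (marg1 K q i (x i)) := by
    intro x
    rcases eq_or_lt_of_le (hρ0 x) with h | h
    · rw [← h]
      simp
    · have hfac : ∀ i : Λ, marg1 K q i (x i) ≠ 0 := by
        intro i
        have h1 : ρ x ≤ marg1 K ρ i (x i) := le_marg1 hρ0 i x
        rw [hm i (x i)] at h1
        exact (lt_of_lt_of_le h h1).ne'
      rw [hq x, Real.log_prod fun i _ => hfac i, Finset.mul_sum]
  rw [Finset.sum_congr rfl fun x _ => step1 x, Finset.sum_comm]
  refine Finset.sum_congr rfl fun i _ => ?_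
  have step2 : ∀ x : ∀ i, K i, ρ x * Real.log (marg1 K q i (x i))
      = ∑ c : K i, (if x i = c then ρ x * Real.log (marg1 K q i c) else 0) := by
    intro x
    rw [Finset.sum_ite_eq Finset.univ (x i) (fun c => ρ x * Real.log (marg1 K q i c))]
    simp
  rw [Finset.sum_congr rfl fun x _ => step2 x, Finset.sum_comm]
  refine Finset.sum_congr rfl fun c _ => ?_
  have step3 : ∀ x : ∀ i, K i, (if x i = c then ρ x * Real.log (marg1 K q i c) else 0)
      = (if x i = c then ρ x else 0) * Real.log (marg1 K q i c) := by
    intro x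
    by_cases h : x i = c <;> simp [h]
  rw [Finset.sum_congr rfl fun x _ => step3 x, ← Finset.sum_mul, ← marg1, hm]

/-- Gibbs' inequality rigidity: equal entropy and cross entropy forces equality. -/
lemma gibbs_eq {p q : (∀ i, K i) → ℝ}
    (hp0 : ∀ x, 0 ≤ p x) (hp1 : ∑ x : ∀ i, K i, p x = 1)
    (hq0 : ∀ x, 0 ≤ q x) (hq1 : ∑ x : ∀ i, K i, q x = 1)
    (habs : ∀ x, q x = 0 → p x = 0)
    (hlog : ∑ x : ∀ i, K i, p x * Real.log (q x) = ∑ x : ∀ i, K i, q x * Real.log (q x))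
    (hent : ∑ x : ∀ i, K i, p x * Real.log (p x) = ∑ x : ∀ i, K i, q x * Real.log (q x)) :
    ∀ x, p x = q x := by
  classical
  set κ : (∀ i, K i) → ℝ :=
    fun x => p x * Real.log (p x) - p x * Real.log (q x) - p x + q x with hκ
  have hqpos : ∀ x, 0 < p x → 0 < q x := by
    intro x hx
    rcases eq_or_lt_of_le (hq0 x) with h | h
    · exact absurd (habs x h.symm) (by linarith)
    · exact h
  have hsum : ∑ x : ∀ i, K i, κ x = 0 := by
    rw [hκ]
    simp only []
    rw [Finset.sum_add_distrib, Finset.sum_sub_distrib, Finset.sum_sub_distrib,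
      hent, hlog, hp1, hq1]
    ring
  have hnn : ∀ x, 0 ≤ κ x := by
    intro x
    rcases eq_or_lt_of_le (hp0 x) with h | h
    · rw [hκ]; simp only []; rw [← h]; simpa using hq0 x
    · have hq' : 0 < q x := hqpos x h
      have hlog' : Real.log (q x / p x) ≤ q x / p x - 1 :=
        Real.log_le_sub_one_of_pos (div_pos hq' h)
      rw [Real.log_div hq'.ne' h.ne'] at hlog'
      have hm := mul_le_mul_of_nonneg_left hlog' h.le
      have he : p x * (q x / p x - 1) = q x - p x := by field_simp
      rw [hκ]
      simp only []
      nlinarith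
  have hzero : ∀ x, κ x = 0 := fun x =>
    (Finset.sum_eq_zero_iff_of_nonneg fun y _ => hnn y).mp hsum x (Finset.mem_univ x)
  intro x
  rcases eq_or_lt_of_le (hp0 x) with h | h
  · have := hzero x
    rw [hκ] at this
    simp only [] at this
    rw [← h] at this ⊢
    simp at this
    linarith
  · by_contra hne
    have hq' : 0 < q x := hqpos x h
    have hne' : q x / p x ≠ 1 := by
      intro hcon
      rw [div_eq_one_iff_eq h.ne'] at hcon
      exact hne hcon.symm
    have hstrict : Real.log (q x / p x) < q x / p x - 1 :=
      Real.log_lt_sub_one_of_pos (div_pos hq' h) hne'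
    rw [Real.log_div hq'.ne' h.ne'] at hstrict
    have hm := mul_lt_mul_of_pos_left hstrict h
    have he : p x * (q x / p x - 1) = q x - p x := by field_simp
    have := hzero x
    rw [hκ] at this
    simp only [] at this
    nlinarith

end Limits

section LimitProps
variable {Λ : Type*} [Fintype Λ] [DecidableEq Λ] {K : Λ → Type*}
    [∀ i, Fintype (K i)] [∀ i, DecidableEq (K i)]
variable {𝒥 : Finset (Finset Λ)}
    {φ : ∀ I : Finset Λ, (∀ i : I, K i) → (∀ i : I, K i) → ℝ}
variable {μ : ℝ → (∀ i, K i) → ℝ} {sn : ℕ → ℝ} {ν : (∀ i, K i) → ℝ}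

lemma tendsto_marg1 (hconv : ∀ x, Filter.Tendsto (fun n => μ (sn n) x) Filter.atTop (𝓝 (ν x)))
    (i : Λ) (c : K i) :
    Filter.Tendsto (fun n => marg1 K (μ (sn n)) i c) Filter.atTop (𝓝 (marg1 K ν i c)) := by
  have : ∀ n, marg1 K (μ (sn n)) i c
      = ∑ y : ∀ i, K i, (if y i = c then μ (sn n) y else 0) := fun n => rfl
  rw [marg1]
  refine tendsto_finset_sum _ fun y _ => ?_
  by_cases h : y i = c
  · simp only [if_pos h]; exact hconv y
  · simp only [if_neg h]; exact tendsto_const_nhds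

lemma tendsto_marginal (hconv : ∀ x, Filter.Tendsto (fun n => μ (sn n) x) Filter.atTop (𝓝 (ν x)))
    (I : Finset Λ) (a : ∀ i : I, K i) :
    Filter.Tendsto (fun n => marginal K (μ (sn n)) I a) Filter.atTop
      (𝓝 (marginal K ν I a)) := by
  rw [marginal]
  refine tendsto_finset_sum _ fun y _ => ?_
  by_cases h : restrictW K I y = a
  · simp only [if_pos h]; exact hconv y
  · simp only [if_neg h]; exact tendsto_const_nhds

lemma limit_nonneg (hpmf : ∀ t ∈ Set.Ici (0 : ℝ), IsPMF K (μ t)) (hsn : ∀ n, (0:ℝ) ≤ sn n)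
    (hconv : ∀ x, Filter.Tendsto (fun n => μ (sn n) x) Filter.atTop (𝓝 (ν x))) :
    ∀ x, 0 ≤ ν x := fun x =>
  ge_of_tendsto (hconv x) (Filter.Eventually.of_forall fun n => (hpmf (sn n) (hsn n)).1 x)

lemma limit_sum_one (hpmf : ∀ t ∈ Set.Ici (0 : ℝ), IsPMF K (μ t)) (hsn : ∀ n, (0:ℝ) ≤ sn n)
    (hconv : ∀ x, Filter.Tendsto (fun n => μ (sn n) x) Filter.atTop (𝓝 (ν x))) :
    ∑ x : ∀ i, K i, ν x = 1 := by
  have h1 : Filter.Tendsto (fun n => ∑ x : ∀ i, K i, μ (sn n) x) Filter.atTop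
      (𝓝 (∑ x : ∀ i, K i, ν x)) := tendsto_finset_sum _ fun x _ => hconv x
  have h2 : (fun n => ∑ x : ∀ i, K i, μ (sn n) x) = fun _ => (1:ℝ) := by
    funext n; exact (hpmf (sn n) (hsn n)).2
  rw [h2] at h1
  exact (tendsto_nhds_unique tendsto_const_nhds h1).symm

lemma limit_marg1 (hφsymm : ∀ I ∈ 𝒥, ∀ a b, φ I a b = φ I b a)
    (hsol : ∀ x, ∀ t ∈ Set.Ici (0 : ℝ),
      HasDerivWithinAt (fun s => μ s x) (recombRHS K 𝒥 φ (μ t) x) (Set.Ici (0 : ℝ)) t)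
    (hsn : ∀ n, (0:ℝ) ≤ sn n)
    (hconv : ∀ x, Filter.Tendsto (fun n => μ (sn n) x) Filter.atTop (𝓝 (ν x))) :
    ∀ (i : Λ) (c : K i), marg1 K ν i c = marg1 K (μ 0) i c := by
  intro i c
  have h1 := tendsto_marg1 hconv i c
  have h2 : (fun n => marg1 K (μ (sn n)) i c) = fun _ => marg1 K (μ 0) i c := by
    funext n; exact marg1_const hφsymm hsol i c (hsn n)
  rw [h2] at h1
  exact tendsto_nhds_unique h1 tendsto_const_nhds

lemma limit_zero_off_supp (hpmf : ∀ t ∈ Set.Ici (0 : ℝ), IsPMF K (μ t))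
    (hsn : ∀ n, (0:ℝ) ≤ sn n)
    (hconv : ∀ x, Filter.Tendsto (fun n => μ (sn n) x) Filter.atTop (𝓝 (ν x)))
    {x : ∀ i, K i} (hx : x ∉ Supp μ) : ν x = 0 := by
  have h1 := hconv x
  have h2 : (fun n => μ (sn n) x) = fun _ => (0:ℝ) := by
    funext n; exact not_supp_zero hpmf hx (hsn n)
  rw [h2] at h1
  exact tendsto_nhds_unique h1 tendsto_const_nhds

lemma tendsto_Hent {S : Set (∀ i, K i)} [DecidablePred (· ∈ S)]
    (hconv : ∀ x, Filter.Tendsto (fun n => μ (sn n) x) Filter.atTop (𝓝 (ν x))) :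
    Filter.Tendsto (fun n => Hent S (μ (sn n))) Filter.atTop (𝓝 (Hent S ν)) := by
  have hcont : Continuous (fun p : ℝ => p * Real.log p) := by
    have := Real.continuous_negMulLog.neg
    exact Real.continuous_mul_log
  rw [Hent]
  refine tendsto_finset_sum _ fun x _ => ?_
  by_cases h : x ∈ S
  · simp only [if_pos h]
    exact (hcont.tendsto (ν x)).comp (hconv x)
  · simp only [if_neg h]; exact tendsto_const_nhds

end LimitProps

section SepLimit
variable {Λ : Type*} [Fintype Λ] [DecidableEq Λ] {K : Λ → Type*}
    [∀ i, Fintype (K i)] [∀ i, DecidableEq (K i)]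
variable {𝒥 : Finset (Finset Λ)}
    {φ : ∀ I : Finset Λ, (∀ i : I, K i) → (∀ i : I, K i) → ℝ}

lemma GF_term_nonneg {S : Set (∀ i, K i)} [DecidablePred (· ∈ S)] {ν : (∀ i, K i) → ℝ}
    (hφpos : ∀ I ∈ 𝒥, ∀ a b, 0 < φ I a b)
    (h0 : ∀ x, 0 ≤ ν x) (hSpos : ∀ x ∈ S, 0 < ν x)
    {I : Finset Λ} (hI : I ∈ 𝒥) (u : ∀ j : (Iᶜ : Finset Λ), K j) (a b : ∀ j : I, K j) :
    0 ≤ (if glue K I u a ∈ S ∧ glue K I u b ∈ S then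
      φ I b a * (marginal K ν I a * ν (glue K I u b) - marginal K ν I b * ν (glue K I u a))
        * (Real.log (marginal K ν I a * ν (glue K I u b))
          - Real.log (marginal K ν I b * ν (glue K I u a)))
     else 0) := by
  by_cases hc : glue K I u a ∈ S ∧ glue K I u b ∈ S
  · rw [if_pos hc]
    have pa : 0 < ν (glue K I u a) := hSpos _ hc.1
    have pb : 0 < ν (glue K I u b) := hSpos _ hc.2
    have pma : 0 < marginal K ν I a := lt_of_lt_of_le pa (le_marginal h0 I u a)
    have pmb : 0 < marginal K ν I b := lt_of_lt_of_le pb (le_marginal h0 I u b)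
    have hkey := mul_log_nonneg' (mul_pos pma pb) (mul_pos pmb pa)
    have := mul_nonneg (hφpos I hI b a).le hkey
    calc (0:ℝ) ≤ φ I b a * ((marginal K ν I a * ν (glue K I u b)
          - marginal K ν I b * ν (glue K I u a))
        * (Real.log (marginal K ν I a * ν (glue K I u b))
          - Real.log (marginal K ν I b * ν (glue K I u a)))) := this
      _ = _ := by ring
  · rw [if_neg hc]

lemma GF_term_le {S : Set (∀ i, K i)} [DecidablePred (· ∈ S)] {ν : (∀ i, K i) → ℝ}
    (hφpos : ∀ I ∈ 𝒥, ∀ a b, 0 < φ I a b)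
    (h0 : ∀ x, 0 ≤ ν x) (hSpos : ∀ x ∈ S, 0 < ν x)
    {I : Finset Λ} (hI : I ∈ 𝒥) (u : ∀ j : (Iᶜ : Finset Λ), K j) (a b : ∀ j : I, K j) :
    (if glue K I u a ∈ S ∧ glue K I u b ∈ S then
      φ I b a * (marginal K ν I a * ν (glue K I u b) - marginal K ν I b * ν (glue K I u a))
        * (Real.log (marginal K ν I a * ν (glue K I u b))
          - Real.log (marginal K ν I b * ν (glue K I u a)))
     else 0) ≤ GFsum 𝒥 φ S ν := by
  have l1 : (if glue K I u a ∈ S ∧ glue K I u b ∈ S then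
      φ I b a * (marginal K ν I a * ν (glue K I u b) - marginal K ν I b * ν (glue K I u a))
        * (Real.log (marginal K ν I a * ν (glue K I u b))
          - Real.log (marginal K ν I b * ν (glue K I u a)))
     else 0) ≤ ∑ b' : ∀ j : I, K j, (if glue K I u a ∈ S ∧ glue K I u b' ∈ S then
      φ I b' a * (marginal K ν I a * ν (glue K I u b') - marginal K ν I b' * ν (glue K I u a))
        * (Real.log (marginal K ν I a * ν (glue K I u b'))
          - Real.log (marginal K ν I b' * ν (glue K I u a)))
     else 0) :=
    Finset.single_le_sum (fun b' _ => GF_term_nonneg hφpos h0 hSpos hI u a b')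
      (Finset.mem_univ b)
  have l2 := Finset.single_le_sum
    (f := fun a' => ∑ b' : ∀ j : I, K j, (if glue K I u a' ∈ S ∧ glue K I u b' ∈ S then
      φ I b' a' * (marginal K ν I a' * ν (glue K I u b') - marginal K ν I b' * ν (glue K I u a'))
        * (Real.log (marginal K ν I a' * ν (glue K I u b'))
          - Real.log (marginal K ν I b' * ν (glue K I u a')))
     else 0))
    (fun a' _ => Finset.sum_nonneg fun b' _ => GF_term_nonneg hφpos h0 hSpos hI u a' b')
    (Finset.mem_univ a)
  have l3 := Finset.single_le_sum
    (f := fun u' => ∑ a' : ∀ j : I, K j, ∑ b' : ∀ j : I, K j,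
      (if glue K I u' a' ∈ S ∧ glue K I u' b' ∈ S then
      φ I b' a' * (marginal K ν I a' * ν (glue K I u' b') - marginal K ν I b' * ν (glue K I u' a'))
        * (Real.log (marginal K ν I a' * ν (glue K I u' b'))
          - Real.log (marginal K ν I b' * ν (glue K I u' a')))
     else 0))
    (fun u' _ => Finset.sum_nonneg fun a' _ => Finset.sum_nonneg fun b' _ =>
      GF_term_nonneg hφpos h0 hSpos hI u' a' b')
    (Finset.mem_univ u)
  have l4 := Finset.single_le_sum
    (f := fun I' => ∑ u' : ∀ j : (I'ᶜ : Finset Λ), K j, ∑ a' : ∀ j : I', K j,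
      ∑ b' : ∀ j : I', K j,
      (if glue K I' u' a' ∈ S ∧ glue K I' u' b' ∈ S then
      φ I' b' a' * (marginal K ν I' a' * ν (glue K I' u' b')
          - marginal K ν I' b' * ν (glue K I' u' a'))
        * (Real.log (marginal K ν I' a' * ν (glue K I' u' b'))
          - Real.log (marginal K ν I' b' * ν (glue K I' u' a')))
     else 0))
    (fun I' hI' =>
      Finset.sum_nonneg fun u' _ => Finset.sum_nonneg fun a' _ =>
        Finset.sum_nonneg fun b' _ => GF_term_nonneg hφpos h0 hSpos hI' u' a' b')
    hI
  calc _ ≤ _ := l1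
    _ ≤ _ := l2
    _ ≤ _ := l3
    _ ≤ GFsum 𝒥 φ S ν := l4

end SepLimit

section SepLimit2
variable {Λ : Type*} [Fintype Λ] [DecidableEq Λ] {K : Λ → Type*}
    [∀ i, Fintype (K i)] [∀ i, DecidableEq (K i)]
variable {𝒥 : Finset (Finset Λ)}
    {φ : ∀ I : Finset Λ, (∀ i : I, K i) → (∀ i : I, K i) → ℝ}
variable {μ : ℝ → (∀ i, K i) → ℝ}

lemma sep_of_GF_lim [DecidablePred (· ∈ Supp μ)]
    (hφpos : ∀ I ∈ 𝒥, ∀ a b, 0 < φ I a b)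
    (hsol : ∀ x, ∀ t ∈ Set.Ici (0 : ℝ),
      HasDerivWithinAt (fun s => μ s x) (recombRHS K 𝒥 φ (μ t) x) (Set.Ici (0 : ℝ)) t)
    (hpmf : ∀ t ∈ Set.Ici (0 : ℝ), IsPMF K (μ t))
    {T : ℝ} (hT1 : 1 ≤ T) (hTpos : ∀ x ∈ Supp μ, ∀ t, T ≤ t → 0 < μ t x)
    {tν : ℕ → ℝ} (htν : ∀ n, T ≤ tν n)
    (hGF : Filter.Tendsto (fun n => GFsum 𝒥 φ (Supp μ) (μ (tν n))) Filter.atTop (𝓝 0))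
    {ν : (∀ i, K i) → ℝ}
    (hconv : ∀ x, Filter.Tendsto (fun n => μ (tν n) x) Filter.atTop (𝓝 (ν x))) :
    ∀ I ∈ 𝒥, SepOn ν I := by
  have hsn0 : ∀ n, (0:ℝ) ≤ tν n := fun n => le_trans (le_trans zero_le_one hT1) (htν n)
  have hν0 : ∀ x, 0 ≤ ν x := limit_nonneg hpmf hsn0 hconv
  have hν1 : ∑ x : ∀ i, K i, ν x = 1 := limit_sum_one hpmf hsn0 hconv
  intro I hI
  have key : ∀ (u : ∀ j : (Iᶜ : Finset Λ), K j) (a b : ∀ j : I, K j),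
      marginal K ν I a * ν (glue K I u b) = marginal K ν I b * ν (glue K I u a) := by
    intro u a b
    have hP : Filter.Tendsto (fun n => marginal K (μ (tν n)) I a * μ (tν n) (glue K I u b))
        Filter.atTop (𝓝 (marginal K ν I a * ν (glue K I u b))) :=
      (tendsto_marginal hconv I a).mul (hconv _)
    have hQ : Filter.Tendsto (fun n => marginal K (μ (tν n)) I b * μ (tν n) (glue K I u a))
        Filter.atTop (𝓝 (marginal K ν I b * ν (glue K I u a))) :=
      (tendsto_marginal hconv I b).mul (hconv _)
    by_cases hua : glue K I u a ∈ Supp μ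
    · by_cases hub : glue K I u b ∈ Supp μ
      · -- main analytic case
        have hsq : ∀ n, φ I b a * (marginal K (μ (tν n)) I a * μ (tν n) (glue K I u b)
              - marginal K (μ (tν n)) I b * μ (tν n) (glue K I u a))^2
            ≤ GFsum 𝒥 φ (Supp μ) (μ (tν n)) := by
          intro n
          have h0n := (hpmf _ (hsn0 n)).1
          have h1n := (hpmf _ (hsn0 n)).2
          have hSp : ∀ x ∈ Supp μ, 0 < μ (tν n) x := fun x hx => hTpos x hx _ (htν n)
          have pa : 0 < μ (tν n) (glue K I u a) := hSp _ hua
          have pb : 0 < μ (tν n) (glue K I u b) := hSp _ hub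
          have pma : 0 < marginal K (μ (tν n)) I a := lt_of_lt_of_le pa (le_marginal h0n I u a)
          have pmb : 0 < marginal K (μ (tν n)) I b := lt_of_lt_of_le pb (le_marginal h0n I u b)
          have hP1 : marginal K (μ (tν n)) I a * μ (tν n) (glue K I u b) ≤ 1 :=
            mul_le_one₀ (marginal_le_one h0n h1n I a) pb.le (pmf_le_one h0n h1n _)
          have hQ1 : marginal K (μ (tν n)) I b * μ (tν n) (glue K I u a) ≤ 1 :=
            mul_le_one₀ (marginal_le_one h0n h1n I b) pa.le (pmf_le_one h0n h1n _)
          have hterm := GF_term_le (ν := μ (tν n)) hφpos h0n hSp hI u a b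
          rw [if_pos ⟨hua, hub⟩] at hterm
          have hkey := sq_le_mul_log (mul_pos pma pb) hP1 (mul_pos pmb pa) hQ1
          have hmul := mul_le_mul_of_nonneg_left hkey (hφpos I hI b a).le
          calc φ I b a * (marginal K (μ (tν n)) I a * μ (tν n) (glue K I u b)
                - marginal K (μ (tν n)) I b * μ (tν n) (glue K I u a))^2
              ≤ φ I b a * ((marginal K (μ (tν n)) I a * μ (tν n) (glue K I u b)
                - marginal K (μ (tν n)) I b * μ (tν n) (glue K I u a))
                * (Real.log (marginal K (μ (tν n)) I a * μ (tν n) (glue K I u b))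
                  - Real.log (marginal K (μ (tν n)) I b * μ (tν n) (glue K I u a)))) := by
                have := hmul
                calc φ I b a * (marginal K (μ (tν n)) I a * μ (tν n) (glue K I u b)
                      - marginal K (μ (tν n)) I b * μ (tν n) (glue K I u a))^2
                    = φ I b a * ((marginal K (μ (tν n)) I a * μ (tν n) (glue K I u b)
                      - marginal K (μ (tν n)) I b * μ (tν n) (glue K I u a))^2) := by ring
                  _ ≤ _ := this
            _ = φ I b a * (marginal K (μ (tν n)) I a * μ (tν n) (glue K I u b)
                - marginal K (μ (tν n)) I b * μ (tν n) (glue K I u a))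
                * (Real.log (marginal K (μ (tν n)) I a * μ (tν n) (glue K I u b))
                  - Real.log (marginal K (μ (tν n)) I b * μ (tν n) (glue K I u a))) := by ring
            _ ≤ GFsum 𝒥 φ (Supp μ) (μ (tν n)) := hterm
        have hnn : ∀ n, (0:ℝ) ≤ φ I b a * (marginal K (μ (tν n)) I a * μ (tν n) (glue K I u b)
              - marginal K (μ (tν n)) I b * μ (tν n) (glue K I u a))^2 :=
          fun n => mul_nonneg (hφpos I hI b a).le (sq_nonneg _)
        have hto0 : Filter.Tendsto (fun n => φ I b a
            * (marginal K (μ (tν n)) I a * μ (tν n) (glue K I u b)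
              - marginal K (μ (tν n)) I b * μ (tν n) (glue K I u a))^2)
            Filter.atTop (𝓝 0) :=
          tendsto_of_tendsto_of_tendsto_of_le_of_le tendsto_const_nhds hGF hnn hsq
        have htolim : Filter.Tendsto (fun n => φ I b a
            * (marginal K (μ (tν n)) I a * μ (tν n) (glue K I u b)
              - marginal K (μ (tν n)) I b * μ (tν n) (glue K I u a))^2)
            Filter.atTop (𝓝 (φ I b a * (marginal K ν I a * ν (glue K I u b)
              - marginal K ν I b * ν (glue K I u a))^2)) :=
          ((hP.sub hQ).pow 2).const_mul _
        have heq0 : φ I b a * (marginal K ν I a * ν (glue K I u b)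
            - marginal K ν I b * ν (glue K I u a))^2 = 0 :=
          tendsto_nhds_unique htolim hto0
        have hsq0 : (marginal K ν I a * ν (glue K I u b)
            - marginal K ν I b * ν (glue K I u a))^2 = 0 := by
          rcases mul_eq_zero.mp heq0 with h | h
          · exact absurd h (hφpos I hI b a).ne'
          · exact h
        have h4 : marginal K ν I a * ν (glue K I u b)
            - marginal K ν I b * ν (glue K I u a) = 0 := by
          have := sq_eq_zero_iff.mp hsq0
          exact this
        linarith [sub_eq_zero.mp h4]
      · -- second point off the support
        have hzb : ν (glue K I u b) = 0 := limit_zero_off_supp hpmf hsn0 hconv hub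
        have hQn : ∀ n, marginal K (μ (tν n)) I b * μ (tν n) (glue K I u a) = 0 := by
          intro n
          have := flux_zero_off_supp hφpos hsol hpmf hub (hsn0 n) I hI a
          rwa [restrictW_glue, recombW_glue] at this
        have hQ0 : marginal K ν I b * ν (glue K I u a) = 0 := by
          have h2 : (fun n => marginal K (μ (tν n)) I b * μ (tν n) (glue K I u a))
              = fun _ => (0:ℝ) := funext hQn
          rw [h2] at hQ
          exact tendsto_nhds_unique hQ (tendsto_const_nhds (X := ℝ) (α := ℕ) (f := Filter.atTop))
        rw [hzb, mul_zero, hQ0]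
    · -- first point off the support
      have hza : ν (glue K I u a) = 0 := limit_zero_off_supp hpmf hsn0 hconv hua
      have hPn : ∀ n, marginal K (μ (tν n)) I a * μ (tν n) (glue K I u b) = 0 := by
        intro n
        have := flux_zero_off_supp hφpos hsol hpmf hua (hsn0 n) I hI b
        rwa [restrictW_glue, recombW_glue] at this
      have hP0 : marginal K ν I a * ν (glue K I u b) = 0 := by
        have h2 : (fun n => marginal K (μ (tν n)) I a * μ (tν n) (glue K I u b))
            = fun _ => (0:ℝ) := funext hPn
        rw [h2] at hP
        exact tendsto_nhds_unique hP (tendsto_const_nhds (X := ℝ) (α := ℕ) (f := Filter.atTop))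
      rw [hza, mul_zero, hP0]
  -- conclude separation
  intro x
  have h1 : ∑ a : ∀ j : I, K j, marginal K ν I a * ν (glue K I (restrictW K Iᶜ x) (restrictW K I x))
      = ν (glue K I (restrictW K Iᶜ x) (restrictW K I x)) := by
    rw [← Finset.sum_mul, sum_marginal, hν1, one_mul]
  have h2 : ∑ a : ∀ j : I, K j,
      marginal K ν I (restrictW K I x) * ν (glue K I (restrictW K Iᶜ x) a)
      = marginal K ν I (restrictW K I x) * marginal K ν Iᶜ (restrictW K Iᶜ x) := by
    rw [← Finset.mul_sum, marginal_compl_eq_sum_glue]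
  have h3 := Finset.sum_congr rfl fun a (_ : a ∈ Finset.univ) =>
    key (restrictW K Iᶜ x) a (restrictW K I x)
  rw [h1, h2] at h3
  rw [margOn_eq_marginal, margOn_eq_marginal]
  rw [glue_restrict] at h3
  exact h3

end SepLimit2

section Final
variable {Λ : Type*} [Fintype Λ] [DecidableEq Λ] {K : Λ → Type*}
    [∀ i, Fintype (K i)] [∀ i, DecidableEq (K i)]

lemma Hent_eq_total {S : Set (∀ i, K i)} [DecidablePred (· ∈ S)] {ρ : (∀ i, K i) → ℝ}
    (hz : ∀ x ∉ S, ρ x = 0) :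
    ∑ x : ∀ i, K i, ρ x * Real.log (ρ x) = Hent S ρ := by
  rw [Hent]
  refine Finset.sum_congr rfl fun x _ => ?_
  by_cases h : x ∈ S
  · rw [if_pos h]
  · rw [if_neg h, hz x h, zero_mul]

theorem tendsto_product_of_T0' {Λ : Type*} [Fintype Λ] [DecidableEq Λ] [Nonempty Λ]
    (K : Λ → Type*) [∀ i, Fintype (K i)] [∀ i, DecidableEq (K i)] [∀ i, Nonempty (K i)]
    (𝒥 : Finset (Finset Λ)) (hT0 : IsT0 𝒥)
    (φ : ∀ I : Finset Λ, (∀ i : I, K i) → (∀ i : I, K i) → ℝ)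
    (hφpos : ∀ I ∈ 𝒥, ∀ a b, 0 < φ I a b)
    (hφsymm : ∀ I ∈ 𝒥, ∀ a b, φ I a b = φ I b a)
    (μ : ℝ → (∀ i, K i) → ℝ)
    (hsol : ∀ x, ∀ t ∈ Set.Ici (0 : ℝ),
      HasDerivWithinAt (fun s => μ s x) (recombRHS K 𝒥 φ (μ t) x) (Set.Ici (0 : ℝ)) t)
    (hpmf : ∀ t ∈ Set.Ici (0 : ℝ), IsPMF K (μ t)) :
    ∀ x, Filter.Tendsto (fun t => μ t x) Filter.atTop
      (𝓝 (∏ i, marg1 K (μ 0) i (x i))) := by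
  classical
  obtain ⟨T, hT1, hTpos⟩ := exists_T hφpos hsol hpmf
  obtain ⟨tseq, htseq, hGF⟩ := exists_seq_GF hφpos hφsymm hsol hpmf hT1 hTpos
  -- extract a convergent subsequence along which entropy production vanishes
  have htseq0 : ∀ n, (0:ℝ) ≤ tseq n := fun n =>
    le_trans (le_trans zero_le_one hT1) (htseq n).1
  obtain ⟨νstar, ψ, hψ, hconvstar⟩ := exists_limit_measure hpmf tseq htseq0
  set sseq : ℕ → ℝ := fun n => tseq (ψ n) with hsseq
  have hsseqT : ∀ n, T ≤ sseq n := fun n => (htseq (ψ n)).1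
  have hsseq0 : ∀ n, (0:ℝ) ≤ sseq n := fun n => htseq0 (ψ n)
  have hsseq_atTop : Filter.Tendsto sseq Filter.atTop Filter.atTop := by
    apply Filter.tendsto_atTop_mono
      (f := fun n : ℕ => (n:ℝ))
    · intro n
      calc (n:ℝ) ≤ (ψ n : ℝ) := Nat.cast_le.mpr hψ.le_apply
        _ ≤ tseq (ψ n) := (htseq (ψ n)).2
    · exact tendsto_natCast_atTop_atTop
  have hGFs : Filter.Tendsto (fun n => GFsum 𝒥 φ (Supp μ) (μ (sseq n)))
      Filter.atTop (𝓝 0) := hGF.comp hψ.tendsto_atTop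
  -- properties of the limit measure
  have hsep : ∀ I ∈ 𝒥, SepOn νstar I :=
    sep_of_GF_lim hφpos hsol hpmf hT1 hTpos hsseqT hGFs hconvstar
  have hν0 : ∀ x, 0 ≤ νstar x := limit_nonneg hpmf hsseq0 hconvstar
  have hν1 : ∑ x : ∀ i, K i, νstar x = 1 := limit_sum_one hpmf hsseq0 hconvstar
  have hmargν : ∀ (i : Λ) (c : K i), marg1 K νstar i c = marg1 K (μ 0) i c :=
    limit_marg1 hφsymm hsol hsseq0 hconvstar
  have hprod : ∀ x, νstar x = ∏ i, marg1 K νstar i (x i) :=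
    fun x => eq_prod_of_separated hν1 hT0 hsep x
  have hLeq : ∀ x, (∏ i, marg1 K (μ 0) i (x i)) = νstar x := by
    intro x
    rw [hprod x]
    exact Finset.prod_congr rfl fun i _ => (hmargν i (x i)).symm
  have hνz : ∀ x ∉ Supp μ, νstar x = 0 :=
    fun x hx => limit_zero_off_supp hpmf hsseq0 hconvstar hx
  have hHents : Filter.Tendsto (fun n => Hent (Supp μ) (μ (sseq n))) Filter.atTop
      (𝓝 (Hent (Supp μ) νstar)) := tendsto_Hent hconvstar
  have hanti : AntitoneOn (fun s => Hent (Supp μ) (μ s)) (Set.Ici T) :=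
    Hent_antitone hφpos hφsymm hsol hpmf hT1 hTpos
  -- final argument by contradiction
  intro x
  by_contra hcon
  rw [Metric.tendsto_atTop] at hcon
  push_neg at hcon
  obtain ⟨ε, hε, hcon'⟩ := hcon
  have hsel : ∀ n : ℕ, ∃ t, max (n:ℝ) T ≤ t ∧ ε ≤ dist (μ t x) (∏ i, marg1 K (μ 0) i (x i)) := by
    intro n
    obtain ⟨t, ht1, ht2⟩ := hcon' (max (n:ℝ) T)
    exact ⟨t, ht1, ht2⟩
  choose rseq hr1 hr2 using hsel
  have hrT : ∀ n, T ≤ rseq n := fun n => le_trans (le_max_right _ _) (hr1 n)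
  have hr0 : ∀ n, (0:ℝ) ≤ rseq n := fun n => le_trans (le_trans zero_le_one hT1) (hrT n)
  obtain ⟨ρ, ψ2, hψ2, hconvρ⟩ := exists_limit_measure hpmf rseq hr0
  set qseq : ℕ → ℝ := fun n => rseq (ψ2 n) with hqseq
  have hqT : ∀ n, T ≤ qseq n := fun n => hrT (ψ2 n)
  have hq0 : ∀ n, (0:ℝ) ≤ qseq n := fun n => hr0 (ψ2 n)
  have hq_atTop : Filter.Tendsto qseq Filter.atTop Filter.atTop := by
    apply Filter.tendsto_atTop_mono (f := fun n : ℕ => (n:ℝ))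
    · intro n
      calc (n:ℝ) ≤ (ψ2 n : ℝ) := Nat.cast_le.mpr hψ2.le_apply
        _ ≤ rseq (ψ2 n) := le_trans (le_max_left _ _) (hr1 (ψ2 n))
    · exact tendsto_natCast_atTop_atTop
  have hρ0 : ∀ y, 0 ≤ ρ y := limit_nonneg hpmf hq0 hconvρ
  have hρ1 : ∑ y : ∀ i, K i, ρ y = 1 := limit_sum_one hpmf hq0 hconvρ
  have hmargρ : ∀ (i : Λ) (c : K i), marg1 K ρ i c = marg1 K (μ 0) i c :=
    limit_marg1 hφsymm hsol hq0 hconvρ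
  have hρz : ∀ y ∉ Supp μ, ρ y = 0 :=
    fun y hy => limit_zero_off_supp hpmf hq0 hconvρ hy
  have hHentq : Filter.Tendsto (fun n => Hent (Supp μ) (μ (qseq n))) Filter.atTop
      (𝓝 (Hent (Supp μ) ρ)) := tendsto_Hent hconvρ
  -- equal entropies
  have hHeq : Hent (Supp μ) ρ = Hent (Supp μ) νstar :=
    antitone_limit_unique hanti hqT hsseqT hq_atTop hsseq_atTop hHentq hHents
  -- marginals match
  have hmm : ∀ (i : Λ) (c : K i), marg1 K ρ i c = marg1 K νstar i c := by
    intro i c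
    rw [hmargρ i c, hmargν i c]
  -- absolute continuity
  have habs : ∀ y, νstar y = 0 → ρ y = 0 := by
    intro y hy
    rw [hprod y] at hy
    obtain ⟨i, _, hi⟩ := Finset.prod_eq_zero_iff.mp hy
    have h1 : ρ y ≤ marg1 K ρ i (y i) := le_marg1 hρ0 i y
    rw [hmm i (y i), hi] at h1
    exact le_antisymm h1 (hρ0 y)
  -- cross entropies
  have hlog : ∑ y : ∀ i, K i, ρ y * Real.log (νstar y)
      = ∑ y : ∀ i, K i, νstar y * Real.log (νstar y) := by
    rw [sum_mul_log_prod hρ0 hmm hprod,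
      sum_mul_log_prod hν0 (fun i c => rfl) hprod]
  have hent : ∑ y : ∀ i, K i, ρ y * Real.log (ρ y)
      = ∑ y : ∀ i, K i, νstar y * Real.log (νstar y) := by
    rw [Hent_eq_total (S := Supp μ) hρz, Hent_eq_total (S := Supp μ) hνz, hHeq]
  have hfinal : ∀ y, ρ y = νstar y :=
    gibbs_eq hρ0 hρ1 hν0 hν1 habs hlog hent
  -- contradiction
  have hlim : Filter.Tendsto (fun n => μ (qseq n) x) Filter.atTop
      (𝓝 (∏ i, marg1 K (μ 0) i (x i))) := by
    rw [hLeq x, ← hfinal x]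
    exact hconvρ x
  have hdist : Filter.Tendsto (fun n => dist (μ (qseq n) x) (∏ i, marg1 K (μ 0) i (x i)))
      Filter.atTop (𝓝 0) := by
    have := hlim.dist (tendsto_const_nhds
      (X := ℝ) (x := ∏ i, marg1 K (μ 0) i (x i)) (f := Filter.atTop (α := ℕ)))
    rwa [dist_self] at this
  have := (hdist.eventually (gt_mem_nhds hε)).exists
  obtain ⟨n, hn⟩ := this
  exact absurd (hr2 (ψ2 n)) (not_le.mpr hn)

end Final

/-- for a `T₀`-system, any solution of the recombination equation consisting of
probability mass functions converges pointwise, as `t → ∞`, to the product of the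
one-dimensional marginals of the initial condition. -/
theorem tendsto_product_of_T0 {Λ : Type*} [Fintype Λ] [DecidableEq Λ] [Nonempty Λ]
    (K : Λ → Type*) [∀ i, Fintype (K i)] [∀ i, DecidableEq (K i)] [∀ i, Nonempty (K i)]
    (𝒥 : Finset (Finset Λ)) (hT0 : IsT0 𝒥)
    (φ : ∀ I : Finset Λ, (∀ i : I, K i) → (∀ i : I, K i) → ℝ)
    (hφpos : ∀ I ∈ 𝒥, ∀ a b, 0 < φ I a b)
    (hφsymm : ∀ I ∈ 𝒥, ∀ a b, φ I a b = φ I b a)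
    (μ : ℝ → (∀ i, K i) → ℝ)
    (hsol : ∀ x, ∀ t ∈ Set.Ici (0 : ℝ),
      HasDerivWithinAt (fun s => μ s x) (recombRHS K 𝒥 φ (μ t) x) (Set.Ici (0 : ℝ)) t)
    (hpmf : ∀ t ∈ Set.Ici (0 : ℝ), IsPMF K (μ t)) :
    ∀ x, Filter.Tendsto (fun t => μ t x) Filter.atTop
      (𝓝 (∏ i, marg1 K (μ 0) i (x i))) := by
  exact tendsto_product_of_T0' K 𝒥 hT0 φ hφpos hφsymm μ hsol hpmf
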